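/- An additive induced-hereditary graph property P that is not the class of all graphs is irreducible if and only if it is indecomposable, i.e. if and only if dec(P) = 1. -/

import Mathlib

/-!  Common framework: finite simple graphs on finite subsets of `ℕ`,
graph properties, `(P₁,…,Pₙ)`-partitions, products of properties,
`P`-decompositions, strict graphs, decomposability numbers, generating
sets, *-joins of copies, and the respecting notions from the paper. -/

/-- A finite simple graph on a finite vertex set of natural numbers. -/
structure NatGraph where
  verts : Finset ℕ
  Adj : ℕ → ℕ → Prop
  symm : ∀ a b, Adj a b → Adj b a
  loopless : ∀ a, ¬Adj a a
  mem_of_adj : ∀ a b, Adj a b → a ∈ verts ∧ b ∈ verts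

/-- The null graph `K₀` (no vertices). -/
def nullGraph : NatGraph where
  verts := ∅
  Adj _ _ := False
  symm _ _ h := h.elim
  loopless _ h := h
  mem_of_adj _ _ h := h.elim

namespace NatGraph

/-- The subgraph of `G` induced by the vertex set `U`. -/
def induce (G : NatGraph) (U : Finset ℕ) : NatGraph where
  verts := G.verts ∩ U
  Adj a b := G.Adj a b ∧ a ∈ U ∧ b ∈ U
  symm a b h := ⟨G.symm a b h.1, h.2.2, h.2.1⟩
  loopless a h := G.loopless a h.1
  mem_of_adj a b h := ⟨Finset.mem_inter.2 ⟨(G.mem_of_adj a b h.1).1, h.2.1⟩,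
    Finset.mem_inter.2 ⟨(G.mem_of_adj a b h.1).2, h.2.2⟩⟩

/-- `φ` is an isomorphism from `G` onto `H`. -/
def IsoVia (G H : NatGraph) (φ : ℕ → ℕ) : Prop :=
  Set.BijOn φ (G.verts : Set ℕ) (H.verts : Set ℕ) ∧
    ∀ a ∈ G.verts, ∀ b ∈ G.verts, (G.Adj a b ↔ H.Adj (φ a) (φ b))

/-- `G` and `H` are isomorphic. -/
def Iso (G H : NatGraph) : Prop := ∃ φ, G.IsoVia H φ

/-- `H ≤ G` : `H` is isomorphic to an induced subgraph of `G`. -/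
def Le (H G : NatGraph) : Prop := ∃ U ⊆ G.verts, H.Iso (G.induce U)

end NatGraph

/-- `K` is the disjoint union of the family `C` of graphs. -/
def IsDisjUnion {k : ℕ} (K : NatGraph) (C : Fin k → NatGraph) : Prop :=
  (∀ i j, i ≠ j → Disjoint (C i).verts (C j).verts) ∧
  K.verts = Finset.univ.biUnion (fun j => (C j).verts) ∧
  ∀ a b, K.Adj a b ↔ ∃ j, (C j).Adj a b

/-- `kG₀` : the set of graphs that are disjoint unions of `k` copies of `G₀`. -/
def kCopies (k : ℕ) (G₀ : NatGraph) : Set NatGraph :=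
  {K | ∃ C : Fin k → NatGraph, (∀ j, (C j).Iso G₀) ∧ IsDisjUnion K C}

/-- The *-join `G₁ * ⋯ * Gₙ` of a family of graphs (with pairwise disjoint
vertex sets): all graphs on the union of the vertex sets inducing each `Gᵢ`,
so that only edges joining distinct `Gᵢ`'s may be added. -/
def StarJoin {n : ℕ} (Gs : Fin n → NatGraph) : Set NatGraph :=
  {H | H.verts = Finset.univ.biUnion (fun i => (Gs i).verts) ∧
    ∀ i, ∀ a ∈ (Gs i).verts, ∀ b ∈ (Gs i).verts, (H.Adj a b ↔ (Gs i).Adj a b)}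

/-- `G * K₁` : the graphs obtained from `G` by adding one new vertex joined
arbitrarily to `G`. -/
def joinOne (G : NatGraph) : Set NatGraph :=
  {H | ∃ v, v ∉ G.verts ∧ H.verts = insert v G.verts ∧
    ∀ a ∈ G.verts, ∀ b ∈ G.verts, (H.Adj a b ↔ G.Adj a b)}

/-- A graph property: a nonempty isomorphism-closed class of graphs (it
contains the null graph, which by convention belongs to every property, and
some graph with at least one vertex). -/
def IsProperty (P : Set NatGraph) : Prop :=
  nullGraph ∈ P ∧ (∃ G ∈ P, G.verts.Nonempty) ∧
    ∀ G H, NatGraph.Iso G H → G ∈ P → H ∈ P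

/-- `P` is induced-hereditary. -/
def IndHer (P : Set NatGraph) : Prop := ∀ G H, G ∈ P → NatGraph.Le H G → H ∈ P

/-- `P` is additive: closed under disjoint unions. -/
def Additive' (P : Set NatGraph) : Prop :=
  ∀ G H K : NatGraph, G ∈ P → H ∈ P → IsDisjUnion K ![G, H] → K ∈ P

/-- An additive induced-hereditary graph property. -/
def IsAIH (P : Set NatGraph) : Prop := IsProperty P ∧ IndHer P ∧ Additive' P

/-- A `(P₁,…,Pₙ)`-partition of `G` (parts may be empty). -/
def IsPartitionInto {n : ℕ} (Ps : Fin n → Set NatGraph) (G : NatGraph)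
    (V : Fin n → Finset ℕ) : Prop :=
  (∀ i j, i ≠ j → Disjoint (V i) (V j)) ∧
  Finset.univ.biUnion V = G.verts ∧
  ∀ i, G.induce (V i) ∈ Ps i

/-- The product `P₁ ∘ ⋯ ∘ Pₙ` of properties. -/
def ProdProp {n : ℕ} (Ps : Fin n → Set NatGraph) : Set NatGraph :=
  {G | ∃ V : Fin n → Finset ℕ, IsPartitionInto Ps G V}

/-- A `P`-decomposition of `G` with parts `V` : the parts are nonempty and
partition `V(G)`, and for every `k ≥ 1` every graph in
`kG[V₁] * ⋯ * kG[Vₙ]` belongs to `P`. -/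
def IsDecomp (P : Set NatGraph) (G : NatGraph) {n : ℕ} (V : Fin n → Finset ℕ) : Prop :=
  (∀ i, (V i).Nonempty) ∧
  (∀ i j, i ≠ j → Disjoint (V i) (V j)) ∧
  Finset.univ.biUnion V = G.verts ∧
  ∀ k : ℕ, 0 < k → ∀ A : Fin n → NatGraph,
    (∀ i, A i ∈ kCopies k (G.induce (V i))) →
    (∀ i j, i ≠ j → Disjoint (A i).verts (A j).verts) →
    ∀ H ∈ StarJoin A, H ∈ P

/-- `dec_P(G)` : the maximum number of parts of a `P`-decomposition of `G`
(`0` if there is none). -/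
noncomputable def decP (P : Set NatGraph) (G : NatGraph) : ℕ :=
  sSup {n | ∃ V : Fin n → Finset ℕ, IsDecomp P G V}

/-- `G` is `P`-strict : `G ∈ P` but some graph in `G * K₁` is not in `P`. -/
def Strict (P : Set NatGraph) (G : NatGraph) : Prop :=
  G ∈ P ∧ ∃ H ∈ joinOne G, H ∉ P

/-- `dec(P) = min { dec_P(G) : G ∈ S(P) }`. -/
noncomputable def decOf (P : Set NatGraph) : ℕ :=
  sInf (decP P '' {G | Strict P G})

/-- `dec_P(𝒢) = min { dec_P(G) : G ∈ 𝒢 }`. -/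
noncomputable def decSet (P 𝒢 : Set NatGraph) : ℕ := sInf (decP P '' 𝒢)

/-- `⟨𝒢⟩` : the induced-hereditary property generated by `𝒢`. -/
def gen (𝒢 : Set NatGraph) : Set NatGraph := {G | ∃ H ∈ 𝒢, NatGraph.Le G H}

/-- `𝒢` is a generating set for `P`. -/
def Generates (𝒢 P : Set NatGraph) : Prop := gen 𝒢 = P

/-- `G` is uniquely `P`-decomposable: it has exactly one `P`-decomposition
(as an unordered partition) with `dec_P(G)` parts. -/
def UniquelyDecomposable (P : Set NatGraph) (G : NatGraph) : Prop :=
  (∃ V : Fin (decP P G) → Finset ℕ, IsDecomp P G V) ∧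
  ∀ V W : Fin (decP P G) → Finset ℕ, IsDecomp P G V → IsDecomp P G W →
    ∃ σ : Equiv.Perm (Fin (decP P G)), ∀ i, W i = V (σ i)

/-- Data exhibiting `Gstar` as a member of `s ⊛ G` : `s` pairwise disjoint
copies of `G` (given by isomorphisms) whose *-join contains `Gstar`. -/
structure CopyJoin (G : NatGraph) (s : ℕ) (Gstar : NatGraph) where
  copies : Fin s → NatGraph
  maps : Fin s → ℕ → ℕ
  iso : ∀ k, G.IsoVia (copies k) (maps k)
  disj : ∀ k l, k ≠ l → Disjoint (copies k).verts (copies l).verts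
  mem : Gstar ∈ StarJoin copies

/-- `Gstar ∈ s ⊛ G` respects `d₀ = (U₁,…,Uₘ)` : every added edge between two
different copies of `G` meets (copies of) two different `Uⱼ`'s, i.e. there is
no edge between the copies of the same `Uⱼ` in two different copies of `G`. -/
def CopyJoin.RespectsJoin {G : NatGraph} {s : ℕ} {Gstar : NatGraph}
    (cj : CopyJoin G s Gstar) {m : ℕ} (U : Fin m → Finset ℕ) : Prop :=
  ∀ k l : Fin s, k ≠ l → ∀ j : Fin m, ∀ a ∈ (U j).image (cj.maps k),
    ∀ b ∈ (U j).image (cj.maps l), ¬Gstar.Adj a b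

/-- A partition `V` of `Gstar ∈ s ⊛ G` respects `d₀ = (U₁,…,Uₘ)` uniformly:
for each part `Vᵢ` there is a single `Uⱼ` such that in every copy `Gᵏ`,
`Vᵢ ∩ V(Gᵏ)` is contained in the copy of `Uⱼ`. -/
def CopyJoin.RespectsUniformly {G : NatGraph} {s : ℕ} {Gstar : NatGraph}
    (cj : CopyJoin G s Gstar) {n m : ℕ}
    (V : Fin n → Finset ℕ) (U : Fin m → Finset ℕ) : Prop :=
  ∀ i, ∃ j, ∀ k, V i ∩ (cj.copies k).verts ⊆ (U j).image (cj.maps k)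

/-- An irreducible additive induced-hereditary property: one that is not the
product of two additive induced-hereditary properties. -/
def IrredProp (P : Set NatGraph) : Prop :=
  IsAIH P ∧ ¬∃ Q R : Set NatGraph, IsAIH Q ∧ IsAIH R ∧ P = ProdProp ![Q, R]

namespace AuxStmt15


open NatGraph

lemma iso_ext {G H : NatGraph} (hv : G.verts = H.verts)
    (ha : ∀ a b, G.Adj a b ↔ H.Adj a b) : G.Iso H := by
  refine ⟨id, ?_, ?_⟩
  · rw [hv]; exact Set.bijOn_id _
  · intro a _ b _; simpa using ha a b

lemma iso_refl (G : NatGraph) : G.Iso G := iso_ext rfl (fun _ _ => Iff.rfl)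

lemma iso_symm {G H : NatGraph} (h : G.Iso H) : H.Iso G := by
  obtain ⟨φ, hbij, hadj⟩ := h
  set ψ := Function.invFunOn φ (G.verts : Set ℕ) with hψ
  have key : ∀ a ∈ H.verts, ψ a ∈ (G.verts : Set ℕ) ∧ φ (ψ a) = a := by
    intro a ha
    have : ∃ x ∈ (G.verts : Set ℕ), φ x = a := hbij.2.2 (by exact_mod_cast ha)
    exact ⟨Function.invFunOn_mem this, Function.invFunOn_eq this⟩
  refine ⟨ψ, Set.BijOn.symm (Set.BijOn.invOn_invFunOn hbij).symm hbij, ?_⟩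
  intro a ha b hb
  obtain ⟨ha', ha''⟩ := key a ha
  obtain ⟨hb', hb''⟩ := key b hb
  have := hadj (ψ a) (by exact_mod_cast ha') (ψ b) (by exact_mod_cast hb')
  rw [ha'', hb''] at this
  exact this.symm

/-- A graph whose vertex set is a singleton has no edges; any two such
graphs are isomorphic. -/
lemma singleton_iso {G H : NatGraph} {v w : ℕ} (hG : G.verts = {v}) (hH : H.verts = {w}) :
    G.Iso H := by
  have hGadj : ∀ a b, ¬G.Adj a b := by
    intro a b hab
    obtain ⟨ha, hb⟩ := G.mem_of_adj a b hab
    rw [hG, Finset.mem_singleton] at ha hb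
    subst ha; subst hb; exact G.loopless _ hab
  have hHadj : ∀ a b, ¬H.Adj a b := by
    intro a b hab
    obtain ⟨ha, hb⟩ := H.mem_of_adj a b hab
    rw [hH, Finset.mem_singleton] at ha hb
    subst ha; subst hb; exact H.loopless _ hab
  refine ⟨fun _ => w, ⟨?_, ?_, ?_⟩, ?_⟩
  · intro x _; rw [hH]; simp
  · intro x hx y hy _
    rw [hG] at hx hy; simp at hx hy; rw [hx, hy]
  · intro y hy
    rw [hH] at hy; simp at hy
    exact ⟨v, by rw [hG]; simp, hy.symm⟩
  · intro a _ b _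
    exact iff_of_false (hGadj a b) (hHadj w w)

lemma null_iso_of_empty {G : NatGraph} (h : G.verts = ∅) : nullGraph.Iso G := by
  refine iso_ext (by simp [nullGraph, h]) ?_
  intro a b
  constructor
  · intro hf; exact hf.elim
  · intro hab
    have := (G.mem_of_adj a b hab).1
    rw [h] at this; simp at this

lemma induce_self_iso (G : NatGraph) : G.Iso (G.induce G.verts) := by
  refine iso_ext ?_ ?_
  · simp [NatGraph.induce]
  · intro a b
    constructor
    · intro hab
      exact ⟨hab, (G.mem_of_adj a b hab).1, (G.mem_of_adj a b hab).2⟩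
    · intro hab; exact hab.1

lemma le_induce (G : NatGraph) (U : Finset ℕ) : (G.induce U).Le G := by
  refine ⟨G.verts ∩ U, Finset.inter_subset_left, iso_ext ?_ ?_⟩
  · show G.verts ∩ U = G.verts ∩ (G.verts ∩ U)
    rw [← Finset.inter_assoc, Finset.inter_self]
  · intro a b
    show G.Adj a b ∧ a ∈ U ∧ b ∈ U ↔ G.Adj a b ∧ a ∈ G.verts ∩ U ∧ b ∈ G.verts ∩ U
    constructor
    · rintro ⟨hab, ha, hb⟩
      exact ⟨hab, Finset.mem_inter.2 ⟨(G.mem_of_adj a b hab).1, ha⟩,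
        Finset.mem_inter.2 ⟨(G.mem_of_adj a b hab).2, hb⟩⟩
    · rintro ⟨hab, ha, hb⟩
      exact ⟨hab, (Finset.mem_inter.1 ha).2, (Finset.mem_inter.1 hb).2⟩



open NatGraph

/-- The union of the first `j` members of a family of graphs. -/
def punion {k : ℕ} (C : Fin k → NatGraph) (j : ℕ) : NatGraph where
  verts := (Finset.univ.filter (fun t : Fin k => t.val < j)).biUnion (fun t => (C t).verts)
  Adj a b := ∃ t : Fin k, t.val < j ∧ (C t).Adj a b
  symm a b h := by obtain ⟨t, ht, h⟩ := h; exact ⟨t, ht, (C t).symm a b h⟩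
  loopless a h := by obtain ⟨t, _, h⟩ := h; exact (C t).loopless a h
  mem_of_adj a b h := by
    obtain ⟨t, ht, h⟩ := h
    obtain ⟨ha, hb⟩ := (C t).mem_of_adj a b h
    constructor <;>
      · rw [Finset.mem_biUnion]
        exact ⟨t, Finset.mem_filter.2 ⟨Finset.mem_univ t, ht⟩, by assumption⟩

lemma kCopies_mem {Q : Set NatGraph} (hQ : IsAIH Q) {X : NatGraph} (hX : X ∈ Q)
    {k : ℕ} {K : NatGraph} (hK : K ∈ kCopies k X) : K ∈ Q := by
  obtain ⟨C, hCiso, hdisjC, hKverts, hKadj⟩ := hK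
  have hstep : ∀ j : ℕ, j ≤ k → punion C j ∈ Q := by
    intro j
    induction j with
    | zero =>
      intro _
      refine hQ.1.2.2 nullGraph _ (null_iso_of_empty ?_) hQ.1.1
      simp [punion]
    | succ j ih =>
      intro hjk
      have hj : j < k := hjk
      have hCj : C ⟨j, hj⟩ ∈ Q := hQ.1.2.2 _ _ (iso_symm (hCiso ⟨j, hj⟩)) hX
      have hdisj1 : Disjoint (punion C j).verts (C ⟨j, hj⟩).verts := by
        show Disjoint (Finset.biUnion _ _) _
        rw [Finset.disjoint_biUnion_left]
        intro t ht
        rw [Finset.mem_filter] at ht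
        refine hdisjC t ⟨j, hj⟩ ?_
        intro h
        rw [h] at ht
        exact absurd ht.2 (lt_irrefl j)
      apply hQ.2.2 (punion C j) (C ⟨j, hj⟩) (punion C (j+1)) (ih (le_of_lt hj)) hCj
      refine ⟨?_, ?_, ?_⟩
      · intro i i' hii'
        fin_cases i <;> fin_cases i' <;>
          simp only [Matrix.cons_val_zero, Matrix.cons_val_one, Matrix.head_cons] at *
        · exact absurd rfl hii'
        · exact hdisj1
        · exact hdisj1.symm
        · exact absurd rfl hii'
      · ext x
        simp only [punion, Finset.mem_biUnion, Finset.mem_filter, Finset.mem_univ,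
          true_and, Fin.exists_fin_two, Matrix.cons_val_zero, Matrix.cons_val_one,
          Matrix.head_cons]
        constructor
        · rintro ⟨t, htj, hx⟩
          rcases Nat.lt_succ_iff_lt_or_eq.1 htj with h | h
          · exact Or.inl ⟨t, h, hx⟩
          · refine Or.inr ?_
            have : t = ⟨j, hj⟩ := Fin.ext h
            rwa [this] at hx
        · rintro (⟨t, htj, hx⟩ | hx)
          · exact ⟨t, Nat.lt_succ_of_lt htj, hx⟩
          · exact ⟨⟨j, hj⟩, Nat.lt_succ_self j, hx⟩
      · intro a b
        show (∃ t : Fin k, t.val < j + 1 ∧ (C t).Adj a b) ↔ _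
        rw [Fin.exists_fin_two]
        simp only [Matrix.cons_val_zero, Matrix.cons_val_one, Matrix.head_cons]
        constructor
        · rintro ⟨t, htj, hadj⟩
          rcases Nat.lt_succ_iff_lt_or_eq.1 htj with h | h
          · exact Or.inl ⟨t, h, hadj⟩
          · refine Or.inr ?_
            have : t = ⟨j, hj⟩ := Fin.ext h
            rwa [this] at hadj
        · rintro (⟨t, htj, hadj⟩ | hadj)
          · exact ⟨t, Nat.lt_succ_of_lt htj, hadj⟩
          · exact ⟨⟨j, hj⟩, Nat.lt_succ_self j, hadj⟩
  refine hQ.1.2.2 (punion C k) K (iso_ext ?_ ?_) (hstep k le_rfl)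
  · rw [hKverts]
    show Finset.biUnion _ _ = _
    congr 1
    refine Finset.filter_true_of_mem ?_
    intro t _; exact t.isLt
  · intro a b
    rw [hKadj a b]
    constructor
    · rintro ⟨t, _, h⟩; exact ⟨t, h⟩
    · rintro ⟨t, h⟩; exact ⟨t, t.isLt, h⟩



open NatGraph

lemma singleton_mem {Q : Set NatGraph} (hQ : IsProperty Q) (hher : IndHer Q)
    {X : NatGraph} {v : ℕ} (hX : X.verts = {v}) : X ∈ Q := by
  obtain ⟨G₀, hG₀, w, hw⟩ := hQ.2.1
  have hY : (G₀.induce {w}).verts = {w} := by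
    show G₀.verts ∩ {w} = {w}
    exact Finset.inter_eq_right.2 (by simpa using hw)
  have hYQ : G₀.induce {w} ∈ Q := hher G₀ _ hG₀ (le_induce G₀ {w})
  exact hQ.2.2 _ _ (singleton_iso hY hX) hYQ

lemma strict_nonempty {P : Set NatGraph} (hP : IsAIH P) {G : NatGraph}
    (hG : Strict P G) : G.verts.Nonempty := by
  obtain ⟨_, H, ⟨v, _, hverts, _⟩, hHP⟩ := hG
  by_contra h
  rw [Finset.not_nonempty_iff_eq_empty] at h
  rw [h] at hverts
  exact hHP (singleton_mem hP.1 hP.2.1 (by rw [hverts]; rfl))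

lemma decomp_card_le {P : Set NatGraph} {G : NatGraph} {n : ℕ} {V : Fin n → Finset ℕ}
    (h : IsDecomp P G V) : n ≤ G.verts.card := by
  obtain ⟨hne, hdisj, hunion, _⟩ := h
  calc n = ∑ _i : Fin n, 1 := by simp
  _ ≤ ∑ i : Fin n, (V i).card :=
      Finset.sum_le_sum (fun i _ => Finset.card_pos.2 (hne i))
  _ = (Finset.univ.biUnion V).card :=
      (Finset.card_biUnion (fun i _ j _ hij => hdisj i j hij)).symm
  _ = G.verts.card := by rw [hunion]

lemma decomp_bddAbove (P : Set NatGraph) (G : NatGraph) :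
    BddAbove {n | ∃ V : Fin n → Finset ℕ, IsDecomp P G V} := by
  refine ⟨G.verts.card, ?_⟩
  rintro n ⟨V, hV⟩
  exact decomp_card_le hV

lemma decP_ge_one {P : Set NatGraph} (hP : IsAIH P) {G : NatGraph}
    (hG : Strict P G) : 1 ≤ decP P G := by
  refine le_csSup (decomp_bddAbove P G) ?_
  show ∃ V : Fin 1 → Finset ℕ, IsDecomp P G V
  refine ⟨![G.verts], ?_, ?_, ?_, ?_⟩
  · intro i
    fin_cases i
    simpa using strict_nonempty hP hG
  · intro i j hij
    exact absurd (Subsingleton.elim i j) hij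
  · ext x
    simp
  · intro k hk A hA hdisj H hH
    have h0 : A 0 ∈ kCopies k (G.induce G.verts) := by simpa using hA 0
    have hGind : G.induce G.verts ∈ P := hP.1.2.2 _ _ (induce_self_iso G) hG.1
    have hA0 : A 0 ∈ P := kCopies_mem hP hGind h0
    have hverts : H.verts = (A 0).verts := by
      rw [hH.1]
      ext x
      simp only [Finset.mem_biUnion, Finset.mem_univ, true_and]
      constructor
      · rintro ⟨j, hj⟩
        rwa [Subsingleton.elim 0 j]
      · intro hx
        exact ⟨0, hx⟩
    refine hP.1.2.2 (A 0) H (iso_ext hverts.symm ?_) hA0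
    intro a b
    constructor
    · intro h
      have mems := (A 0).mem_of_adj a b h
      exact (hH.2 0 a mems.1 b mems.2).mpr h
    · intro h
      have mems := H.mem_of_adj a b h
      rw [hverts] at mems
      exact (hH.2 0 a mems.1 b mems.2).mp h

lemma exists_strict {P : Set NatGraph} (hP : IsAIH P) (hne : P ≠ Set.univ) :
    ∃ G, Strict P G := by
  obtain ⟨H₀, hH₀⟩ := (Set.ne_univ_iff_exists_notMem P).1 hne
  have hS : {m | ∃ H : NatGraph, H ∉ P ∧ H.verts.card = m}.Nonempty := ⟨_, H₀, hH₀, rfl⟩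
  obtain ⟨H, hHP, hcard⟩ := Nat.sInf_mem hS
  have hmin : ∀ H' : NatGraph, H'.verts.card < H.verts.card → H' ∈ P := by
    intro H' hlt
    by_contra h
    have hmem' : H'.verts.card ∈ {m | ∃ H : NatGraph, H ∉ P ∧ H.verts.card = m} :=
      ⟨H', h, rfl⟩
    have hle := Nat.sInf_le hmem'
    omega
  have hne' : H.verts.Nonempty := by
    by_contra h
    rw [Finset.not_nonempty_iff_eq_empty] at h
    exact hHP (hP.1.2.2 nullGraph H (null_iso_of_empty h) hP.1.1)
  obtain ⟨v, hv⟩ := hne'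
  have hGverts : (H.induce (H.verts.erase v)).verts = H.verts.erase v := by
    show H.verts ∩ H.verts.erase v = _
    exact Finset.inter_eq_right.2 (Finset.erase_subset v H.verts)
  have hpos : 0 < H.verts.card := Finset.card_pos.2 ⟨v, hv⟩
  have hGP : H.induce (H.verts.erase v) ∈ P := by
    apply hmin
    rw [hGverts, Finset.card_erase_of_mem hv]
    omega
  refine ⟨H.induce (H.verts.erase v), hGP, H, ⟨v, ?_, ?_, ?_⟩, hHP⟩
  · rw [hGverts]; simp
  · rw [hGverts, Finset.insert_erase hv]
  · intro a ha b hb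
    rw [hGverts] at ha hb
    constructor
    · intro h
      exact ⟨h, ha, hb⟩
    · intro h
      exact h.1

lemma two_le_decP_of_factor {P Q R : Set NatGraph} (hP : IsAIH P) (hQ : IsAIH Q)
    (hR : IsAIH R) (hPQ : P = ProdProp ![Q, R]) {G : NatGraph} (hG : Strict P G) :
    2 ≤ decP P G := by
  -- every graph on exactly two vertices is in the product
  have two_mem : ∀ (X : NatGraph) (u v : ℕ), u ≠ v → X.verts = {u, v} →
      X ∈ ProdProp ![Q, R] := by
    intro X u v huv hX
    refine ⟨![{u}, {v}], ?_, ?_, ?_⟩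
    · intro i j hij
      fin_cases i <;> fin_cases j <;>
        simp_all [Finset.disjoint_singleton, huv, Ne.symm huv]
    · ext x
      rw [hX]
      simp [Fin.exists_fin_two]
    · intro i
      have hu : u ∈ X.verts := by rw [hX]; simp
      have hvv : v ∈ X.verts := by rw [hX]; simp
      fin_cases i
      · show X.induce {u} ∈ Q
        refine singleton_mem hQ.1 hQ.2.1 (v := u) ?_
        show X.verts ∩ {u} = {u}
        exact Finset.inter_eq_right.2 (by simpa using hu)
      · show X.induce {v} ∈ R
        refine singleton_mem hR.1 hR.2.1 (v := v) ?_
        show X.verts ∩ {v} = {v}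
        exact Finset.inter_eq_right.2 (by simpa using hvv)
  -- the strict graph has at least two vertices
  have hcard2 : 2 ≤ G.verts.card := by
    by_contra h
    push_neg at h
    have h1 : 1 ≤ G.verts.card := Finset.card_pos.2 (strict_nonempty hP hG)
    have hcard1 : G.verts.card = 1 := by omega
    obtain ⟨u, hu⟩ := Finset.card_eq_one.1 hcard1
    obtain ⟨_, H, ⟨v, hv, hHverts, _⟩, hHP⟩ := hG
    rw [hu] at hv hHverts
    have hvu : v ≠ u := by simpa using hv
    apply hHP
    rw [hPQ]
    exact two_mem H v u hvu (by rw [hHverts])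
  -- build a two-part partition with both parts nonempty
  obtain ⟨W0, W1, hW0ne, hW1ne, hWdisj, hWunion, hW0Q, hW1R⟩ :
      ∃ W0 W1 : Finset ℕ, W0.Nonempty ∧ W1.Nonempty ∧ Disjoint W0 W1 ∧
        W0 ∪ W1 = G.verts ∧ G.induce W0 ∈ Q ∧ G.induce W1 ∈ R := by
    have hGP : G ∈ ProdProp ![Q, R] := hPQ ▸ hG.1
    obtain ⟨V, hdisj, hunion, hmem⟩ := hGP
    have hmem0 : G.induce (V 0) ∈ Q := by simpa using hmem 0
    have hmem1 : G.induce (V 1) ∈ R := by simpa using hmem 1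
    have hunion' : V 0 ∪ V 1 = G.verts := by
      rw [← hunion]
      ext x
      simp [Fin.exists_fin_two]
    have hd01 : Disjoint (V 0) (V 1) := hdisj 0 1 (by simp)
    obtain ⟨w, hw⟩ : G.verts.Nonempty := strict_nonempty hP hG
    by_cases h0 : (V 0).Nonempty
    · by_cases h1 : (V 1).Nonempty
      · exact ⟨V 0, V 1, h0, h1, hd01, hunion', hmem0, hmem1⟩
      · -- V 1 empty, so G ∈ Q; put one vertex into the R-side
        have hV1 : V 1 = ∅ := Finset.not_nonempty_iff_eq_empty.1 h1
        have hV0 : V 0 = G.verts := by rw [← hunion', hV1, Finset.union_empty]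
        have hGQ : G ∈ Q := by
          refine hQ.1.2.2 _ _ (iso_symm ?_) hmem0
          rw [hV0]
          exact induce_self_iso G
        have herasene : (G.verts.erase w).Nonempty := by
          rw [← Finset.card_pos, Finset.card_erase_of_mem hw]
          omega
        refine ⟨G.verts.erase w, {w}, herasene, Finset.singleton_nonempty w,
          ?_, ?_, ?_, ?_⟩
        · simp
        · rw [Finset.union_comm, ← Finset.insert_eq, Finset.insert_erase hw]
        · exact hQ.2.1 G _ hGQ (le_induce G _)
        · refine singleton_mem hR.1 hR.2.1 (v := w) ?_
          show G.verts ∩ {w} = {w}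
          exact Finset.inter_eq_right.2 (by simpa using hw)
    · -- V 0 empty, so G ∈ R; put one vertex into the Q-side
      have hV0 : V 0 = ∅ := Finset.not_nonempty_iff_eq_empty.1 h0
      have hV1 : V 1 = G.verts := by rw [← hunion', hV0, Finset.empty_union]
      have hGR : G ∈ R := by
        refine hR.1.2.2 _ _ (iso_symm ?_) hmem1
        rw [hV1]
        exact induce_self_iso G
      have herasene : (G.verts.erase w).Nonempty := by
        rw [← Finset.card_pos, Finset.card_erase_of_mem hw]
        omega
      refine ⟨{w}, G.verts.erase w, Finset.singleton_nonempty w, herasene,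
        ?_, ?_, ?_, ?_⟩
      · simp
      · rw [← Finset.insert_eq, Finset.insert_erase hw]
      · refine singleton_mem hQ.1 hQ.2.1 (v := w) ?_
        show G.verts ∩ {w} = {w}
        exact Finset.inter_eq_right.2 (by simpa using hw)
      · exact hR.2.1 G _ hGR (le_induce G _)
  -- the two-part partition is a P-decomposition
  refine le_csSup (decomp_bddAbove P G) ?_
  show ∃ V : Fin 2 → Finset ℕ, IsDecomp P G V
  refine ⟨![W0, W1], ?_, ?_, ?_, ?_⟩
  · intro i
    fin_cases i <;> simpa using (by first | exact hW0ne | exact hW1ne)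
  · intro i j hij
    fin_cases i <;> fin_cases j <;> simp_all [hWdisj, hWdisj.symm]
  · ext x
    rw [← hWunion]
    simp [Fin.exists_fin_two]
  · intro k hk A hA hAdisj H hH
    have hA0Q : A 0 ∈ Q := kCopies_mem hQ hW0Q (by simpa using hA 0)
    have hA1R : A 1 ∈ R := kCopies_mem hR hW1R (by simpa using hA 1)
    rw [hPQ]
    refine ⟨fun i => (A i).verts, hAdisj, hH.1.symm, ?_⟩
    intro i
    have hsub : (A i).verts ⊆ H.verts := by
      rw [hH.1]
      intro x hx
      exact Finset.mem_biUnion.2 ⟨i, Finset.mem_univ i, hx⟩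
    have hiso : (A i).Iso (H.induce (A i).verts) := by
      refine iso_ext ?_ ?_
      · show (A i).verts = H.verts ∩ (A i).verts
        exact (Finset.inter_eq_right.2 hsub).symm
      · intro a b
        show (A i).Adj a b ↔ H.Adj a b ∧ a ∈ (A i).verts ∧ b ∈ (A i).verts
        constructor
        · intro h
          have mems := (A i).mem_of_adj a b h
          exact ⟨(hH.2 i a mems.1 b mems.2).mpr h, mems.1, mems.2⟩
        · rintro ⟨h, ha, hb⟩
          exact (hH.2 i a ha b hb).mp h
    fin_cases i
    · simpa using hQ.1.2.2 _ _ hiso hA0Q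
    · simpa using hR.1.2.2 _ _ hiso hA1R


/-! ### Foundation: shifted copies, disjoint unions, glue joins, iso transport -/

/-- Copy of a graph with all vertices shifted by `o`. -/
def shiftCopy (X : NatGraph) (o : ℕ) : NatGraph where
  verts := X.verts.image (· + o)
  Adj a b := ∃ a' b', X.Adj a' b' ∧ a = a' + o ∧ b = b' + o
  symm a b h := by
    obtain ⟨a', b', h, ha, hb⟩ := h
    exact ⟨b', a', X.symm _ _ h, hb, ha⟩
  loopless a h := by
    obtain ⟨a', b', h, ha, hb⟩ := h
    have : a' = b' := by omega
    exact X.loopless a' (this ▸ h)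
  mem_of_adj a b h := by
    obtain ⟨a', b', h, ha, hb⟩ := h
    obtain ⟨h1, h2⟩ := X.mem_of_adj _ _ h
    exact ⟨Finset.mem_image.2 ⟨a', h1, ha.symm⟩, Finset.mem_image.2 ⟨b', h2, hb.symm⟩⟩

lemma shiftCopy_adj_iff {X : NatGraph} {o a b : ℕ} :
    (shiftCopy X o).Adj (a + o) (b + o) ↔ X.Adj a b := by
  constructor
  · rintro ⟨a', b', h, ha, hb⟩
    have h1 : a' = a := by omega
    have h2 : b' = b := by omega
    rw [← h1, ← h2]; exact h
  · intro h; exact ⟨a, b, h, rfl, rfl⟩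

lemma shiftCopy_isoVia (X : NatGraph) (o : ℕ) : X.IsoVia (shiftCopy X o) (· + o) := by
  constructor
  · have hinj : Set.InjOn (· + o) (X.verts : Set ℕ) := by
      intro a _ b _ h
      simpa using h
    have := hinj.bijOn_image
    have himg : ((· + o) '' (X.verts : Set ℕ)) = ((shiftCopy X o).verts : Set ℕ) := by
      show _ = ((X.verts.image (· + o) : Finset ℕ) : Set ℕ)
      rw [Finset.coe_image]
    rwa [himg] at this
  · intro a _ b _
    show X.Adj a b ↔ (shiftCopy X o).Adj (a + o) (b + o)
    exact shiftCopy_adj_iff.symm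

lemma shiftCopy_iso (X : NatGraph) (o : ℕ) : X.Iso (shiftCopy X o) := ⟨_, shiftCopy_isoVia X o⟩

lemma shiftCopy_mem_bounds {X : NatGraph} {o x : ℕ} (hx : x ∈ (shiftCopy X o).verts) :
    o ≤ x ∧ x ≤ X.verts.sup id + o := by
  obtain ⟨y, hy, rfl⟩ := Finset.mem_image.1 hx
  have := Finset.le_sup (f := id) hy
  simp only [id] at this
  omega

lemma shiftCopy_mem_iff {X : NatGraph} {o x : ℕ} :
    (x + o) ∈ (shiftCopy X o).verts ↔ x ∈ X.verts := by
  constructor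
  · intro h
    obtain ⟨y, hy, hyx⟩ := Finset.mem_image.1 h
    have : y = x := by omega
    rwa [← this]
  · intro h; exact Finset.mem_image.2 ⟨x, h, rfl⟩

lemma shiftCopy_disjoint {X Y : NatGraph} {B o₁ o₂ : ℕ} (hX : X.verts.sup id ≤ B)
    (h : o₁ + B < o₂) :
    Disjoint (shiftCopy X o₁).verts (shiftCopy Y o₂).verts := by
  rw [Finset.disjoint_left]
  intro x h1 h2
  have b1 := shiftCopy_mem_bounds h1
  have b2 := shiftCopy_mem_bounds h2
  omega

lemma disjUnion_adj_localize {k : ℕ} {K : NatGraph} {C : Fin k → NatGraph}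
    (h : IsDisjUnion K C) {c : Fin k} {a b : ℕ} (ha : a ∈ (C c).verts) :
    K.Adj a b ↔ (C c).Adj a b := by
  rw [h.2.2]
  constructor
  · rintro ⟨c', h'⟩
    obtain ⟨ha', _⟩ := (C c').mem_of_adj _ _ h'
    rcases eq_or_ne c' c with rfl | hne
    · exact h'
    · exact absurd ha (Finset.disjoint_left.1 (h.1 c' c hne) ha')
  · intro h'; exact ⟨c, h'⟩

lemma punion_isDisjUnion {k : ℕ} (C : Fin k → NatGraph)
    (hdisj : ∀ i j, i ≠ j → Disjoint (C i).verts (C j).verts) :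
    IsDisjUnion (punion C k) C := by
  refine ⟨hdisj, ?_, ?_⟩
  · show Finset.biUnion _ _ = _
    congr 1
    refine Finset.filter_true_of_mem ?_
    intro t _; exact t.isLt
  · intro a b
    constructor
    · rintro ⟨t, _, h⟩; exact ⟨t, h⟩
    · rintro ⟨t, h⟩; exact ⟨t, t.isLt, h⟩

/-- A disjoint union of members of an additive induced-hereditary class is in
the class. -/
lemma disjUnion_mem {Q : Set NatGraph} (hQ : IsAIH Q) {k : ℕ} {C : Fin k → NatGraph}
    (hC : ∀ c, C c ∈ Q)
    (hdisj : ∀ i j, i ≠ j → Disjoint (C i).verts (C j).verts)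
    {K : NatGraph} (hK : IsDisjUnion K C) : K ∈ Q := by
  have hstep : ∀ j : ℕ, j ≤ k → punion C j ∈ Q := by
    intro j
    induction j with
    | zero =>
      intro _
      refine hQ.1.2.2 nullGraph _ (null_iso_of_empty ?_) hQ.1.1
      simp [punion]
    | succ j ih =>
      intro hjk
      have hj : j < k := hjk
      have hdisj1 : Disjoint (punion C j).verts (C ⟨j, hj⟩).verts := by
        show Disjoint (Finset.biUnion _ _) _
        rw [Finset.disjoint_biUnion_left]
        intro t ht
        rw [Finset.mem_filter] at ht
        refine hdisj t ⟨j, hj⟩ ?_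
        intro h
        rw [h] at ht
        exact absurd ht.2 (lt_irrefl j)
      apply hQ.2.2 (punion C j) (C ⟨j, hj⟩) (punion C (j+1)) (ih (le_of_lt hj)) (hC _)
      refine ⟨?_, ?_, ?_⟩
      · intro i i' hii'
        fin_cases i <;> fin_cases i' <;>
          simp only [Matrix.cons_val_zero, Matrix.cons_val_one, Matrix.head_cons] at *
        · exact absurd rfl hii'
        · exact hdisj1
        · exact hdisj1.symm
        · exact absurd rfl hii'
      · ext x
        simp only [punion, Finset.mem_biUnion, Finset.mem_filter, Finset.mem_univ,
          true_and, Fin.exists_fin_two, Matrix.cons_val_zero, Matrix.cons_val_one,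
          Matrix.head_cons]
        constructor
        · rintro ⟨t, htj, hx⟩
          rcases Nat.lt_succ_iff_lt_or_eq.1 htj with h | h
          · exact Or.inl ⟨t, h, hx⟩
          · refine Or.inr ?_
            have : t = ⟨j, hj⟩ := Fin.ext h
            rwa [this] at hx
        · rintro (⟨t, htj, hx⟩ | hx)
          · exact ⟨t, Nat.lt_succ_of_lt htj, hx⟩
          · exact ⟨⟨j, hj⟩, Nat.lt_succ_self j, hx⟩
      · intro a b
        show (∃ t : Fin k, t.val < j + 1 ∧ (C t).Adj a b) ↔ _
        rw [Fin.exists_fin_two]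
        simp only [Matrix.cons_val_zero, Matrix.cons_val_one, Matrix.head_cons]
        constructor
        · rintro ⟨t, htj, hadj⟩
          rcases Nat.lt_succ_iff_lt_or_eq.1 htj with h | h
          · exact Or.inl ⟨t, h, hadj⟩
          · refine Or.inr ?_
            have : t = ⟨j, hj⟩ := Fin.ext h
            rwa [this] at hadj
        · rintro (⟨t, htj, hadj⟩ | hadj)
          · exact ⟨t, Nat.lt_succ_of_lt htj, hadj⟩
          · exact ⟨⟨j, hj⟩, Nat.lt_succ_self j, hadj⟩
  have hiso : (punion C k).Iso K := by
    refine iso_ext ?_ ?_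
    · rw [hK.2.1]
      show Finset.biUnion _ _ = _
      congr 1
      refine Finset.filter_true_of_mem ?_
      intro t _; exact t.isLt
    · intro a b
      rw [hK.2.2 a b]
      constructor
      · rintro ⟨t, _, h⟩; exact ⟨t, h⟩
      · rintro ⟨t, h⟩; exact ⟨t, t.isLt, h⟩
  exact hQ.1.2.2 _ _ hiso (hstep k le_rfl)

lemma iso_trans {G H K : NatGraph} (h1 : G.Iso H) (h2 : H.Iso K) : G.Iso K := by
  obtain ⟨φ, hφb, hφa⟩ := h1
  obtain ⟨ψ, hψb, hψa⟩ := h2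
  refine ⟨ψ ∘ φ, hψb.comp hφb, ?_⟩
  intro a ha b hb
  rw [hφa a ha b hb]
  exact hψa _ (hφb.1 ha) _ (hφb.1 hb)

lemma iso_restrict {X Y : NatGraph} {φ : ℕ → ℕ} (h : X.IsoVia Y φ) {U : Finset ℕ}
    (hU : U ⊆ X.verts) : (X.induce U).Iso (Y.induce (U.image φ)) := by
  have himg : (U.image φ) ⊆ Y.verts := by
    intro y hy
    obtain ⟨x, hx, rfl⟩ := Finset.mem_image.1 hy
    exact_mod_cast h.1.1 (by exact_mod_cast hU hx)
  refine ⟨φ, ?_, ?_⟩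
  · have hv1 : ((X.induce U).verts : Set ℕ) = (U : Set ℕ) := by
      show ((X.verts ∩ U : Finset ℕ) : Set ℕ) = _
      rw [Finset.inter_eq_right.2 hU]
    have hv2 : ((Y.induce (U.image φ)).verts : Set ℕ) = φ '' (U : Set ℕ) := by
      show ((Y.verts ∩ U.image φ : Finset ℕ) : Set ℕ) = _
      rw [Finset.inter_eq_right.2 himg, Finset.coe_image]
    rw [hv1, hv2]
    exact (h.1.2.1.mono (by exact_mod_cast hU)).bijOn_image
  · intro a ha b hb
    have haU : a ∈ U := by
      have : a ∈ X.verts ∩ U := ha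
      exact (Finset.mem_inter.1 this).2
    have hbU : b ∈ U := by
      have : b ∈ X.verts ∩ U := hb
      exact (Finset.mem_inter.1 this).2
    show (X.Adj a b ∧ a ∈ U ∧ b ∈ U) ↔
      (Y.Adj (φ a) (φ b) ∧ φ a ∈ U.image φ ∧ φ b ∈ U.image φ)
    constructor
    · rintro ⟨hab, _, _⟩
      exact ⟨(h.2 a (hU haU) b (hU hbU)).1 hab,
        Finset.mem_image_of_mem φ haU, Finset.mem_image_of_mem φ hbU⟩
    · rintro ⟨hab, _, _⟩
      exact ⟨(h.2 a (hU haU) b (hU hbU)).2 hab, haU, hbU⟩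

lemma induce_induce (G : NatGraph) (U W : Finset ℕ) :
    ((G.induce U).induce W).Iso (G.induce (U ∩ W)) := by
  refine iso_ext ?_ ?_
  · show (G.verts ∩ U) ∩ W = G.verts ∩ (U ∩ W)
    rw [Finset.inter_assoc]
  · intro a b
    show ((G.Adj a b ∧ a ∈ U ∧ b ∈ U) ∧ a ∈ W ∧ b ∈ W) ↔
      (G.Adj a b ∧ a ∈ U ∩ W ∧ b ∈ U ∩ W)
    simp only [Finset.mem_inter]
    tauto

lemma le_refl' (X : NatGraph) : X.Le X := ⟨X.verts, Finset.Subset.refl _, induce_self_iso X⟩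

lemma le_trans' {A B C : NatGraph} (h1 : A.Le B) (h2 : B.Le C) : A.Le C := by
  obtain ⟨U, hU, hiso1⟩ := h1
  obtain ⟨W, hW, ψ, hψ⟩ := h2
  refine ⟨W ∩ U.image ψ, Finset.inter_subset_left.trans hW, ?_⟩
  refine iso_trans hiso1 (iso_trans (iso_restrict hψ hU) ?_)
  exact induce_induce C W (U.image ψ)

lemma le_of_iso_le {A B C : NatGraph} (h1 : A.Iso B) (h2 : B.Le C) : A.Le C := by
  obtain ⟨U, hU, hiso⟩ := h2
  exact ⟨U, hU, iso_trans h1 hiso⟩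

lemma piece_induced {k : ℕ} {K : NatGraph} {C : Fin k → NatGraph} (h : IsDisjUnion K C)
    (c : Fin k) : (C c).Iso (K.induce (C c).verts) := by
  have hsub : (C c).verts ⊆ K.verts := by
    rw [h.2.1]
    intro x hx
    exact Finset.mem_biUnion.2 ⟨c, Finset.mem_univ c, hx⟩
  refine iso_ext ?_ ?_
  · show (C c).verts = K.verts ∩ (C c).verts
    exact (Finset.inter_eq_right.2 hsub).symm
  · intro a b
    show (C c).Adj a b ↔ K.Adj a b ∧ a ∈ (C c).verts ∧ b ∈ (C c).verts
    constructor
    · intro hab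
      obtain ⟨ha, hb⟩ := (C c).mem_of_adj a b hab
      exact ⟨(h.2.2 a b).2 ⟨c, hab⟩, ha, hb⟩
    · rintro ⟨hab, ha, hb⟩
      exact (disjUnion_adj_localize h ha).1 hab

/-- Glue a disjoint family of graphs, adding between distinct members exactly
the edges given by (the symmetrization of) `E`. -/
def glue {m : ℕ} (A : Fin m → NatGraph) (E : ℕ → ℕ → Prop) : NatGraph where
  verts := Finset.univ.biUnion (fun i => (A i).verts)
  Adj a b := (∃ i, (A i).Adj a b) ∨
    (a ≠ b ∧ (E a b ∨ E b a) ∧ ∃ i j, i ≠ j ∧ a ∈ (A i).verts ∧ b ∈ (A j).verts)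
  symm a b h := by
    rcases h with ⟨i, h⟩ | ⟨hne, hE, i, j, hij, ha, hb⟩
    · exact Or.inl ⟨i, (A i).symm _ _ h⟩
    · exact Or.inr ⟨hne.symm, hE.symm, j, i, hij.symm, hb, ha⟩
  loopless a h := by
    rcases h with ⟨i, h⟩ | ⟨hne, _⟩
    · exact (A i).loopless a h
    · exact hne rfl
  mem_of_adj a b h := by
    rcases h with ⟨i, h⟩ | ⟨_, _, i, j, _, ha, hb⟩
    · obtain ⟨ha, hb⟩ := (A i).mem_of_adj a b h
      exact ⟨Finset.mem_biUnion.2 ⟨i, Finset.mem_univ i, ha⟩,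
        Finset.mem_biUnion.2 ⟨i, Finset.mem_univ i, hb⟩⟩
    · exact ⟨Finset.mem_biUnion.2 ⟨i, Finset.mem_univ i, ha⟩,
        Finset.mem_biUnion.2 ⟨j, Finset.mem_univ j, hb⟩⟩

lemma glue_adj_same {m : ℕ} {A : Fin m → NatGraph} {E : ℕ → ℕ → Prop}
    (hdisj : ∀ i j, i ≠ j → Disjoint (A i).verts (A j).verts)
    {i : Fin m} {a b : ℕ} (ha : a ∈ (A i).verts) (hb : b ∈ (A i).verts) :
    (glue A E).Adj a b ↔ (A i).Adj a b := by
  constructor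
  · rintro (⟨i', h'⟩ | ⟨_, _, i', j', hij, ha', hb'⟩)
    · obtain ⟨ha'', _⟩ := (A i').mem_of_adj _ _ h'
      rcases eq_or_ne i' i with rfl | hne
      · exact h'
      · exact absurd ha (Finset.disjoint_left.1 (hdisj i' i hne) ha'')
    · rcases eq_or_ne i' i with rfl | hne
      · rcases eq_or_ne j' i' with rfl | hne'
        · exact absurd rfl hij
        · exact absurd hb (Finset.disjoint_left.1 (hdisj j' i' hne') hb')
      · exact absurd ha (Finset.disjoint_left.1 (hdisj i' i hne) ha')
  · intro h
    exact Or.inl ⟨i, h⟩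

lemma glue_adj_cross {m : ℕ} {A : Fin m → NatGraph} {E : ℕ → ℕ → Prop}
    (hdisj : ∀ i j, i ≠ j → Disjoint (A i).verts (A j).verts)
    {i j : Fin m} (hij : i ≠ j) {a b : ℕ} (ha : a ∈ (A i).verts)
    (hb : b ∈ (A j).verts) :
    (glue A E).Adj a b ↔ (E a b ∨ E b a) := by
  have hab : a ≠ b := by
    intro h
    exact absurd hb (h ▸ Finset.disjoint_left.1 (hdisj i j hij) ha)
  constructor
  · rintro (⟨i', h'⟩ | ⟨_, hE, _⟩)
    · obtain ⟨ha', hb'⟩ := (A i').mem_of_adj _ _ h'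
      rcases eq_or_ne i' i with rfl | hne
      · exact absurd hb (Finset.disjoint_left.1 (hdisj i' j hij) hb')
      · exact absurd ha (Finset.disjoint_left.1 (hdisj i' i hne) ha')
    · exact hE
  · intro hE
    exact Or.inr ⟨hab, hE, i, j, hij, ha, hb⟩

lemma glue_mem_starJoin {m : ℕ} {A : Fin m → NatGraph} (E : ℕ → ℕ → Prop)
    (hdisj : ∀ i j, i ≠ j → Disjoint (A i).verts (A j).verts) :
    glue A E ∈ StarJoin A := by
  refine ⟨rfl, ?_⟩
  intro i a ha b hb
  exact glue_adj_same hdisj ha hb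

/-! ### Witnesses and strictness transfer -/

def singletonGraph (v : ℕ) : NatGraph where
  verts := {v}
  Adj _ _ := False
  symm _ _ h := h.elim
  loopless _ h := h
  mem_of_adj _ _ h := h.elim

/-- A strict graph has a non-`P` one-vertex extension whose new vertex has a
nonempty neighbourhood. -/
lemma exists_witness {P : Set NatGraph} (hP : IsAIH P) {G : NatGraph} (hG : Strict P G) :
    ∃ (Hh : NatGraph) (v : ℕ) (T : Finset ℕ), Hh ∉ P ∧ v ∉ G.verts ∧
      Hh.verts = insert v G.verts ∧
      (∀ a ∈ G.verts, ∀ b ∈ G.verts, (Hh.Adj a b ↔ G.Adj a b)) ∧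
      T ⊆ G.verts ∧ T.Nonempty ∧
      (∀ a ∈ G.verts, (Hh.Adj v a ↔ a ∈ T)) := by
  classical
  obtain ⟨hGP, Hh, ⟨v, hv, hverts, hagree⟩, hHP⟩ := hG
  set T := G.verts.filter (fun a => Hh.Adj v a) with hT
  have hTa : ∀ a ∈ G.verts, (Hh.Adj v a ↔ a ∈ T) := by
    intro a ha
    rw [hT, Finset.mem_filter]
    exact ⟨fun h => ⟨ha, h⟩, fun h => h.2⟩
  refine ⟨Hh, v, T, hHP, hv, hverts, hagree, Finset.filter_subset _ _, ?_, hTa⟩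
  by_contra hTne
  rw [Finset.not_nonempty_iff_eq_empty] at hTne
  apply hHP
  have hsing : singletonGraph v ∈ P :=
    singleton_mem hP.1 hP.2.1 (v := v) rfl
  apply hP.2.2 G (singletonGraph v) Hh hGP hsing
  have hnov : ∀ b, ¬ Hh.Adj v b := by
    intro b hb
    have hbm := (Hh.mem_of_adj v b hb).2
    rw [hverts, Finset.mem_insert] at hbm
    rcases hbm with hbv | hbm
    · rw [hbv] at hb
      exact Hh.loopless v hb
    · have : b ∈ T := (hTa b hbm).1 hb
      rw [hTne] at this
      simp at this
  refine ⟨?_, ?_, ?_⟩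
  · intro i j hij
    fin_cases i <;> fin_cases j <;>
      simp only [Matrix.cons_val_zero, Matrix.cons_val_one, Matrix.head_cons] at *
    · exact absurd rfl hij
    · show Disjoint G.verts {v}
      simp [hv]
    · show Disjoint {v} G.verts
      simp [hv]
    · exact absurd rfl hij
  · rw [hverts]
    ext x
    simp only [Finset.mem_biUnion, Finset.mem_univ, true_and, Fin.exists_fin_two,
      Matrix.cons_val_zero, Matrix.cons_val_one, Matrix.head_cons, Finset.mem_insert,
      singletonGraph, Finset.mem_singleton]
    tauto
  · intro a b
    rw [Fin.exists_fin_two]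
    simp only [Matrix.cons_val_zero, Matrix.cons_val_one, Matrix.head_cons]
    show Hh.Adj a b ↔ G.Adj a b ∨ False
    rw [or_false]
    constructor
    · intro h
      have ha := (Hh.mem_of_adj a b h).1
      have hb := (Hh.mem_of_adj a b h).2
      rw [hverts, Finset.mem_insert] at ha hb
      rcases ha with rfl | ha
      · exact absurd h (hnov b)
      · rcases hb with rfl | hb
        · exact absurd (Hh.symm a b h) (hnov a)
        · exact (hagree a ha b hb).1 h
    · intro h
      obtain ⟨ha, hb⟩ := G.mem_of_adj a b h
      exact (hagree a ha b hb).2 h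

/-- Extend a graph by one new vertex joined exactly to `T'`. -/
def extendGraph (N : NatGraph) (w : ℕ) (T' : Finset ℕ) (hT : T' ⊆ N.verts)
    (hw : w ∉ N.verts) : NatGraph where
  verts := insert w N.verts
  Adj a b := N.Adj a b ∨ (a = w ∧ b ∈ T') ∨ (b = w ∧ a ∈ T')
  symm a b h := by
    rcases h with h | ⟨ha, hb⟩ | ⟨hb, ha⟩
    · exact Or.inl (N.symm a b h)
    · exact Or.inr (Or.inr ⟨ha, hb⟩)
    · exact Or.inr (Or.inl ⟨hb, ha⟩)
  loopless a h := by
    rcases h with h | ⟨ha, hb⟩ | ⟨hb, ha⟩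
    · exact N.loopless a h
    · exact hw (ha ▸ hT hb)
    · exact hw (hb ▸ hT ha)
  mem_of_adj a b h := by
    rcases h with h | ⟨ha, hb⟩ | ⟨hb, ha⟩
    · obtain ⟨h1, h2⟩ := N.mem_of_adj a b h
      exact ⟨Finset.mem_insert_of_mem h1, Finset.mem_insert_of_mem h2⟩
    · exact ⟨by rw [ha]; exact Finset.mem_insert_self w _,
        Finset.mem_insert_of_mem (hT hb)⟩
    · exact ⟨Finset.mem_insert_of_mem (hT ha),
        by rw [hb]; exact Finset.mem_insert_self w _⟩

lemma extendGraph_mem_joinOne {N : NatGraph} {w : ℕ} {T' : Finset ℕ}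
    (hT : T' ⊆ N.verts) (hw : w ∉ N.verts) :
    extendGraph N w T' hT hw ∈ joinOne N := by
  refine ⟨w, hw, rfl, ?_⟩
  intro a ha b hb
  constructor
  · rintro (h | ⟨rfl, _⟩ | ⟨rfl, _⟩)
    · exact h
    · exact absurd ha hw
    · exact absurd hb hw
  · intro h
    exact Or.inl h

/-- If `N ∈ P` contains an induced copy of a strict graph (with witness data),
then `N` is `P`-strict. -/
lemma strict_of_contains {P : Set NatGraph} (hP : IsAIH P) {G N : NatGraph}
    (hNP : N ∈ P) {γ : ℕ → ℕ} (hγ : G.IsoVia (N.induce (G.verts.image γ)) γ)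
    (hWsub : G.verts.image γ ⊆ N.verts)
    {Hh : NatGraph} {v : ℕ} {T : Finset ℕ} (hHP : Hh ∉ P) (hv : v ∉ G.verts)
    (hHverts : Hh.verts = insert v G.verts)
    (hagree : ∀ a ∈ G.verts, ∀ b ∈ G.verts, (Hh.Adj a b ↔ G.Adj a b))
    (hTsub : T ⊆ G.verts)
    (hTadj : ∀ a ∈ G.verts, (Hh.Adj v a ↔ a ∈ T)) :
    Strict P N := by
  set W := G.verts.image γ with hW
  set w := N.verts.sup id + 1 with hwdef
  have hwN : w ∉ N.verts := by
    intro h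
    have := Finset.le_sup (f := id) h
    simp only [id] at this
    omega
  have hTW : T.image γ ⊆ N.verts := by
    intro x hx
    obtain ⟨t, ht, rfl⟩ := Finset.mem_image.1 hx
    exact hWsub (Finset.mem_image_of_mem γ (hTsub ht))
  refine ⟨hNP, extendGraph N w (T.image γ) hTW hwN,
    extendGraph_mem_joinOne hTW hwN, ?_⟩
  intro hEP
  set Eg := extendGraph N w (T.image γ) hTW hwN with hEg
  -- the induced subgraph on `insert w W` is isomorphic to `Hh`
  set U := insert w W with hU
  have hUsub : U ⊆ Eg.verts := by
    rw [hU]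
    intro x hx
    rcases Finset.mem_insert.1 hx with rfl | hx
    · exact Finset.mem_insert_self _ _
    · exact Finset.mem_insert_of_mem (hWsub hx)
  have hIndP : Eg.induce U ∈ P := hP.2.1 Eg _ hEP (le_induce Eg U)
  -- build the isomorphism  Hh ≅ Eg.induce U
  have hγinj : Set.InjOn γ (G.verts : Set ℕ) := hγ.1.2.1
  have hmemW : ∀ x ∈ G.verts, γ x ∈ W := fun x hx => Finset.mem_image_of_mem γ hx
  have hWne : ∀ x ∈ G.verts, γ x ≠ w := by
    intro x hx h
    exact hwN (h ▸ hWsub (hmemW x hx))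
  set φ : ℕ → ℕ := fun x => if x = v then w else γ x with hφdef
  have hφv : φ v = w := by simp [hφdef]
  have hφx : ∀ x, x ≠ v → φ x = γ x := by
    intro x hx
    simp [hφdef, hx]
  have hφG : ∀ x ∈ G.verts, φ x = γ x := by
    intro x hx
    exact hφx x (fun h => hv (h ▸ hx))
  have hiso : Hh.Iso (Eg.induce U) := by
    refine ⟨φ, ?_, ?_⟩
    · have hUverts : ((Eg.induce U).verts : Set ℕ) = (U : Set ℕ) := by
        show ((Eg.verts ∩ U : Finset ℕ) : Set ℕ) = _
        rw [Finset.inter_eq_right.2 hUsub]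
      rw [hUverts]
      have hHv : (Hh.verts : Set ℕ) = insert v (G.verts : Set ℕ) := by
        rw [hHverts]; simp
      have hUs : (U : Set ℕ) = insert w (W : Set ℕ) := by
        rw [hU]; simp
      rw [hHv, hUs]
      refine ⟨?_, ?_, ?_⟩
      · rintro x hx
        rcases hx with rfl | hx
        · rw [hφv]; exact Set.mem_insert w _
        · have hxG : x ∈ G.verts := by exact_mod_cast hx
          rw [hφG x hxG]
          exact Set.mem_insert_of_mem w (by exact_mod_cast hmemW x hxG)
      · intro x hx y hy hxy
        rcases hx with hx | hx <;> rcases hy with hy | hy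
        · rw [hx, hy]
        · exfalso
          have hyG : y ∈ G.verts := by exact_mod_cast hy
          rw [hx, hφv, hφG y hyG] at hxy
          exact hWne y hyG hxy.symm
        · exfalso
          have hxG : x ∈ G.verts := by exact_mod_cast hx
          rw [hy, hφv, hφG x hxG] at hxy
          exact hWne x hxG hxy
        · have hxG : x ∈ G.verts := by exact_mod_cast hx
          have hyG : y ∈ G.verts := by exact_mod_cast hy
          rw [hφG x hxG, hφG y hyG] at hxy
          exact hγinj hx hy hxy
      · rintro y hy
        rcases hy with rfl | hy
        · exact ⟨v, Set.mem_insert v _, hφv⟩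
        · obtain ⟨x, hx, rfl⟩ : ∃ x ∈ G.verts, γ x = y := by
            obtain ⟨x, hx, hxy⟩ := Finset.mem_image.1 (by exact_mod_cast hy : y ∈ W)
            exact ⟨x, hx, hxy⟩
          exact ⟨x, Set.mem_insert_of_mem v (by exact_mod_cast hx), hφG x hx⟩
    · intro a ha b hb
      rw [hHverts, Finset.mem_insert] at ha hb
      have hEadj : ∀ x ∈ G.verts, ∀ y ∈ G.verts,
          (Eg.Adj (γ x) (γ y) ↔ G.Adj x y) := by
        intro x hx y hy
        have h1 : G.Adj x y ↔ N.Adj (γ x) (γ y) := by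
          rw [hγ.2 x hx y hy]
          show (N.Adj (γ x) (γ y) ∧ _ ∧ _) ↔ _
          constructor
          · exact fun h => h.1
          · exact fun h => ⟨h, hmemW x hx, hmemW y hy⟩
        rw [h1]
        show (N.Adj (γ x) (γ y) ∨ _ ∨ _) ↔ _
        constructor
        · rintro (h | ⟨h, _⟩ | ⟨h, _⟩)
          · exact h
          · exact absurd h (hWne x hx)
          · exact absurd h (hWne y hy)
        · exact fun h => Or.inl h
      have hEw : ∀ x ∈ G.verts, (Eg.Adj w (γ x) ↔ x ∈ T) := by
        intro x hx
        show (N.Adj w (γ x) ∨ _ ∨ _) ↔ _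
        constructor
        · rintro (h | ⟨_, h⟩ | ⟨h, _⟩)
          · exact absurd (N.mem_of_adj _ _ h).1 hwN
          · obtain ⟨t, ht, hte⟩ := Finset.mem_image.1 h
            have : t = x := hγinj (by exact_mod_cast hTsub ht) (by exact_mod_cast hx) hte
            rwa [← this]
          · exact absurd h (hWne x hx)
        · intro h
          exact Or.inr (Or.inl ⟨rfl, Finset.mem_image_of_mem γ h⟩)
      have hmem : ∀ x, x = v ∨ x ∈ G.verts → φ x ∈ U := by
        rintro x (rfl | hx)
        · rw [hφv]; exact Finset.mem_insert_self _ _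
        · rw [hφG x hx, hU]
          exact Finset.mem_insert_of_mem (hmemW x hx)
      show Hh.Adj a b ↔ (Eg.Adj (φ a) (φ b) ∧ φ a ∈ U ∧ φ b ∈ U)
      rw [and_iff_left ⟨hmem a ha, hmem b hb⟩]
      rcases ha with hav | ha
      · rcases hb with hbv | hb
        · rw [hav, hbv, hφv]
          exact iff_of_false (Hh.loopless v) (Eg.loopless w)
        · rw [hav, hφv, hφG b hb, hEw b hb]
          exact hTadj b hb
      · rcases hb with hbv | hb
        · rw [hbv, hφv, hφG a ha]
          constructor
          · intro h
            exact Eg.symm _ _ ((hEw a ha).2 ((hTadj a ha).1 (Hh.symm a v h)))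
          · intro h
            exact Hh.symm v a ((hTadj a ha).2 ((hEw a ha).1 (Eg.symm _ _ h)))
        · rw [hφG a ha, hφG b hb, hEadj a ha b hb]
          exact hagree a ha b hb
  exact hHP (hP.1.2.2 _ _ (iso_symm hiso) hIndP)

/-- Generic embedding of a forbidden one-vertex extension: if `K ∈ P` contains
vertices realizing the extension pattern `(G, v, T)`, contradiction. -/
lemma witness_embed {P : Set NatGraph} (hP : IsAIH P) {G K : NatGraph} {μ : ℕ → ℕ} {w : ℕ}
    {Hh : NatGraph} {v : ℕ} {T : Finset ℕ} (hHP : Hh ∉ P) (hv : v ∉ G.verts)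
    (hHverts : Hh.verts = insert v G.verts)
    (hagree : ∀ a ∈ G.verts, ∀ b ∈ G.verts, (Hh.Adj a b ↔ G.Adj a b))
    (hTadj : ∀ a ∈ G.verts, (Hh.Adj v a ↔ a ∈ T))
    (hμinj : Set.InjOn μ (G.verts : Set ℕ)) (hwK : w ∈ K.verts)
    (hμK : ∀ x ∈ G.verts, μ x ∈ K.verts)
    (hwμ : ∀ x ∈ G.verts, μ x ≠ w)
    (hadjG : ∀ x ∈ G.verts, ∀ y ∈ G.verts, (K.Adj (μ x) (μ y) ↔ G.Adj x y))
    (hadjw : ∀ x ∈ G.verts, (K.Adj w (μ x) ↔ x ∈ T))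
    (hKP : K ∈ P) : False := by
  classical
  set U : Finset ℕ := insert w (G.verts.image μ) with hU
  have hUsub : U ⊆ K.verts := by
    rw [hU]
    intro x hx
    rcases Finset.mem_insert.1 hx with rfl | hx
    · exact hwK
    · obtain ⟨y, hy, rfl⟩ := Finset.mem_image.1 hx
      exact hμK y hy
  have hIndP : K.induce U ∈ P := hP.2.1 K _ hKP (le_induce K U)
  set φ : ℕ → ℕ := fun x => if x = v then w else μ x with hφdef
  have hφv : φ v = w := by simp [hφdef]
  have hφG : ∀ x ∈ G.verts, φ x = μ x := by
    intro x hx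
    have : x ≠ v := fun h => hv (h ▸ hx)
    simp [hφdef, this]
  have hiso : Hh.Iso (K.induce U) := by
    refine ⟨φ, ?_, ?_⟩
    · have hUverts : ((K.induce U).verts : Set ℕ) = (U : Set ℕ) := by
        show ((K.verts ∩ U : Finset ℕ) : Set ℕ) = _
        rw [Finset.inter_eq_right.2 hUsub]
      rw [hUverts]
      have hHv : (Hh.verts : Set ℕ) = insert v (G.verts : Set ℕ) := by
        rw [hHverts]; simp
      have hUs : (U : Set ℕ) = insert w ((G.verts.image μ : Finset ℕ) : Set ℕ) := by
        rw [hU]; simp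
      rw [hHv, hUs]
      refine ⟨?_, ?_, ?_⟩
      · rintro x hx
        rcases hx with rfl | hx
        · rw [hφv]; exact Set.mem_insert w _
        · have hxG : x ∈ G.verts := by exact_mod_cast hx
          rw [hφG x hxG]
          exact Set.mem_insert_of_mem w (by exact_mod_cast Finset.mem_image_of_mem μ hxG)
      · intro x hx y hy hxy
        rcases hx with hx | hx <;> rcases hy with hy | hy
        · rw [hx, hy]
        · exfalso
          have hyG : y ∈ G.verts := by exact_mod_cast hy
          rw [hx, hφv, hφG y hyG] at hxy
          exact hwμ y hyG hxy.symm
        · exfalso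
          have hxG : x ∈ G.verts := by exact_mod_cast hx
          rw [hy, hφv, hφG x hxG] at hxy
          exact hwμ x hxG hxy
        · have hxG : x ∈ G.verts := by exact_mod_cast hx
          have hyG : y ∈ G.verts := by exact_mod_cast hy
          rw [hφG x hxG, hφG y hyG] at hxy
          exact hμinj hx hy hxy
      · rintro y hy
        rcases hy with rfl | hy
        · exact ⟨v, Set.mem_insert v _, hφv⟩
        · obtain ⟨x, hx, rfl⟩ : ∃ x ∈ G.verts, μ x = y := by
            obtain ⟨x, hx, hxy⟩ := Finset.mem_image.1 (by exact_mod_cast hy)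
            exact ⟨x, hx, hxy⟩
          exact ⟨x, Set.mem_insert_of_mem v (by exact_mod_cast hx), hφG x hx⟩
    · intro a ha b hb
      rw [hHverts, Finset.mem_insert] at ha hb
      have hmem : ∀ x, x = v ∨ x ∈ G.verts → φ x ∈ U := by
        rintro x (rfl | hx)
        · rw [hφv]; exact Finset.mem_insert_self _ _
        · rw [hφG x hx, hU]
          exact Finset.mem_insert_of_mem (Finset.mem_image_of_mem μ hx)
      show Hh.Adj a b ↔ (K.Adj (φ a) (φ b) ∧ φ a ∈ U ∧ φ b ∈ U)
      rw [and_iff_left ⟨hmem a ha, hmem b hb⟩]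
      rcases ha with hav | ha
      · rcases hb with hbv | hb
        · rw [hav, hbv, hφv]
          exact iff_of_false (Hh.loopless v) (K.loopless w)
        · rw [hav, hφv, hφG b hb, hadjw b hb]
          exact hTadj b hb
      · rcases hb with hbv | hb
        · rw [hbv, hφv, hφG a ha]
          constructor
          · intro h
            exact K.symm _ _ ((hadjw a ha).2 ((hTadj a ha).1 (Hh.symm a v h)))
          · intro h
            exact Hh.symm v a ((hTadj a ha).2 ((hadjw a ha).1 (K.symm _ _ h)))
        · rw [hφG a ha, hφG b hb, hadjG a ha b hb]
          exact hagree a ha b hb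
  exact hHP (hP.1.2.2 _ _ (iso_symm hiso) hIndP)

/-! ### The clone lemma: every part of a `P`-decomposition meets every copy of
a witness neighbourhood. -/

lemma offset_lt {B : ℕ} : ∀ l l' : ℕ, l < l' → l * (B+1) + B < l' * (B+1) := by
  intro l l' h
  have h1 : (l+1)*(B+1) ≤ l'*(B+1) := Nat.mul_le_mul_right _ h
  have h2 : (l+1)*(B+1) = l*(B+1) + (B+1) := by ring
  rw [h2] at h1
  omega

lemma offset_decode {B x y l l' : ℕ} (hx : x ≤ B) (hy : y ≤ B)
    (h : x + l*(B+1) = y + l'*(B+1)) : x = y ∧ l = l' := by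
  rcases Nat.lt_trichotomy l l' with hl | hl | hl
  · exact absurd h (by have := offset_lt (B := B) l l' hl; omega)
  · refine ⟨?_, hl⟩
    rw [hl] at h
    omega
  · exact absurd h (by have := offset_lt (B := B) l' l hl; omega)

lemma clone_lemma {P : Set NatGraph} (hP : IsAIH P) {G N : NatGraph} {m : ℕ}
    {V : Fin m → Finset ℕ} (hdec : IsDecomp P N V)
    {φ : ℕ → ℕ} (hφ : G.IsoVia (N.induce (G.verts.image φ)) φ)
    (hWsub : G.verts.image φ ⊆ N.verts)
    {Hh : NatGraph} {v : ℕ} {T : Finset ℕ} (hHP : Hh ∉ P) (hv : v ∉ G.verts)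
    (hHverts : Hh.verts = insert v G.verts)
    (hagree : ∀ a ∈ G.verts, ∀ b ∈ G.verts, (Hh.Adj a b ↔ G.Adj a b))
    (hTsub : T ⊆ G.verts)
    (hTadj : ∀ a ∈ G.verts, (Hh.Adj v a ↔ a ∈ T)) :
    ∀ t : Fin m, ((T.image φ) ∩ V t).Nonempty := by
  classical
  intro t0
  by_contra hne0
  rw [Finset.not_nonempty_iff_eq_empty] at hne0
  set W := G.verts.image φ with hWdef
  set B := N.verts.sup id with hBdef
  have hB : ∀ x ∈ N.verts, x ≤ B := by
    intro x hx
    have := Finset.le_sup (f := id) hx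
    simpa using this
  have hVsub : ∀ t, V t ⊆ N.verts := by
    intro t x hx
    rw [← hdec.2.2.1]
    exact Finset.mem_biUnion.2 ⟨t, Finset.mem_univ t, hx⟩
  have hφinj : Set.InjOn φ (G.verts : Set ℕ) := hφ.1.2.1
  have hφmem : ∀ x ∈ G.verts, φ x ∈ N.verts := fun x hx =>
    hWsub (Finset.mem_image_of_mem φ hx)
  have hNadj : ∀ x ∈ G.verts, ∀ y ∈ G.verts, (N.Adj (φ x) (φ y) ↔ G.Adj x y) := by
    intro x hx y hy
    rw [hφ.2 x hx y hy]
    constructor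
    · intro h
      exact ⟨h, Finset.mem_image_of_mem φ hx, Finset.mem_image_of_mem φ hy⟩
    · exact fun h => h.1
  -- the part map
  have hex : ∀ x ∈ N.verts, ∃ t, x ∈ V t := by
    intro x hx
    rw [← hdec.2.2.1] at hx
    obtain ⟨t, _, ht⟩ := Finset.mem_biUnion.1 hx
    exact ⟨t, ht⟩
  set pt : ℕ → Fin m := fun x => if h : ∃ t, x ∈ V t then h.choose else t0 with hptdef
  have hpt : ∀ x, ∀ t, x ∈ V t → x ∈ V (pt x) := by
    intro x t hx
    have h : ∃ t, x ∈ V t := ⟨t, hx⟩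
    rw [hptdef]
    simp only [dif_pos h]
    exact h.choose_spec
  have hptu : ∀ x, ∀ t, x ∈ V t → pt x = t := by
    intro x t hx
    by_contra hne
    exact absurd hx (Finset.disjoint_left.1 (hdec.2.1 (pt x) t hne) (hpt x t hx))
  -- offsets and shifted copies
  set O : Fin m → Fin 2 → ℕ := fun t c => (2 * t.val + c.val) * (B + 1) with hOdef
  have hsupV : ∀ t : Fin m, (N.induce (V t)).verts.sup id ≤ B := by
    intro t
    refine Finset.sup_mono ?_
    exact Finset.inter_subset_left
  set Cp : Fin m → Fin 2 → NatGraph :=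
    fun t c => shiftCopy (N.induce (V t)) (O t c) with hCpdef
  have hOdecode : ∀ (x y : ℕ) (t t' : Fin m) (c c' : Fin 2), x ≤ B → y ≤ B →
      x + O t c = y + O t' c' → x = y ∧ t = t' ∧ c = c' := by
    intro x y t t' c c' hx hy heq
    have hc := c.isLt
    have hc' := c'.isLt
    have hdec' := offset_decode (B := B) hx hy heq
    refine ⟨hdec'.1, Fin.ext (by omega), Fin.ext (by omega)⟩
  have hCpDisj : ∀ (t t' : Fin m) (c c' : Fin 2),
      ¬(t = t' ∧ c = c') → Disjoint (Cp t c).verts (Cp t' c').verts := by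
    intro t t' c c' h
    have hc := c.isLt
    have hc' := c'.isLt
    have hll : 2*t.val + c.val ≠ 2*t'.val + c'.val := by
      intro he
      apply h
      have ht : t.val = t'.val := by omega
      have hcc : c.val = c'.val := by omega
      exact ⟨Fin.ext ht, Fin.ext hcc⟩
    rcases Nat.lt_trichotomy (2*t.val + c.val) (2*t'.val + c'.val) with hlt | heq | hlt
    · exact shiftCopy_disjoint (hsupV t) (offset_lt _ _ hlt)
    · exact absurd heq hll
    · exact (shiftCopy_disjoint (hsupV t') (offset_lt _ _ hlt)).symm
  have hCpMem : ∀ (t : Fin m) (c : Fin 2) (x : ℕ), x ∈ V t → x ∈ N.verts →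
      (x + O t c) ∈ (Cp t c).verts := by
    intro t c x hx hxN
    exact shiftCopy_mem_iff.2 (Finset.mem_inter.2 ⟨hxN, hx⟩)
  have hCpMemD : ∀ (t : Fin m) (c : Fin 2) (y : ℕ), y ∈ (Cp t c).verts →
      ∃ x, x ∈ N.verts ∧ x ∈ V t ∧ y = x + O t c := by
    intro t c y hy
    obtain ⟨x, hx, rfl⟩ := Finset.mem_image.1 hy
    obtain ⟨h1, h2⟩ := Finset.mem_inter.1 hx
    exact ⟨x, h1, h2, rfl⟩
  -- the two-copies family
  set A : Fin m → NatGraph := fun t => punion ![Cp t 0, Cp t 1] 2 with hAdef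
  have hpair : ∀ t : Fin m, ∀ i j : Fin 2, i ≠ j →
      Disjoint ((![Cp t 0, Cp t 1] : Fin 2 → NatGraph) i).verts
        ((![Cp t 0, Cp t 1] : Fin 2 → NatGraph) j).verts := by
    intro t i j hij
    fin_cases i <;> fin_cases j <;>
      simp only [Matrix.cons_val_zero, Matrix.cons_val_one, Matrix.head_cons]
    · exact absurd rfl hij
    · exact hCpDisj t t 0 1 (by simp)
    · exact hCpDisj t t 1 0 (by simp)
    · exact absurd rfl hij
  have hAdu : ∀ t, IsDisjUnion (A t) ![Cp t 0, Cp t 1] :=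
    fun t => punion_isDisjUnion _ (hpair t)
  have hAkc : ∀ t, A t ∈ kCopies 2 (N.induce (V t)) := by
    intro t
    refine ⟨![Cp t 0, Cp t 1], ?_, hAdu t⟩
    intro j
    fin_cases j <;>
      simp only [Matrix.cons_val_zero, Matrix.cons_val_one, Matrix.head_cons] <;>
      exact iso_symm (shiftCopy_iso _ _)
  have hAverts : ∀ (t : Fin m) (x : ℕ),
      x ∈ (A t).verts ↔ x ∈ (Cp t 0).verts ∨ x ∈ (Cp t 1).verts := by
    intro t x
    rw [(hAdu t).2.1]
    simp only [Finset.mem_biUnion, Finset.mem_univ, true_and, Fin.exists_fin_two,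
      Matrix.cons_val_zero, Matrix.cons_val_one, Matrix.head_cons]
  have hAdisj : ∀ t t', t ≠ t' → Disjoint (A t).verts (A t').verts := by
    intro t t' htt
    rw [Finset.disjoint_left]
    intro x hx hx'
    rw [hAverts] at hx hx'
    have : ∀ (c c' : Fin 2), x ∈ (Cp t c).verts → x ∈ (Cp t' c').verts → False := by
      intro c c' h1 h2
      exact Finset.disjoint_left.1 (hCpDisj t t' c c' (fun h => htt h.1)) h1 h2
    rcases hx with h1 | h1 <;> rcases hx' with h2 | h2
    · exact this 0 0 h1 h2
    · exact this 0 1 h1 h2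
    · exact this 1 0 h1 h2
    · exact this 1 1 h1 h2
  -- the special vertex
  obtain ⟨u, hu⟩ := hdec.1 t0
  have huN : u ∈ N.verts := hVsub t0 hu
  set w : ℕ := u + O t0 1 with hwdef
  have hwmem : w ∈ (Cp t0 1).verts := hCpMem t0 1 u hu huN
  have hwA : w ∈ (A t0).verts := (hAverts t0 w).2 (Or.inr hwmem)
  -- the embedding of the copy of `G` into the first copies
  set μ : ℕ → ℕ := fun x => φ x + O (pt (φ x)) 0 with hμdef
  have hμCp : ∀ x ∈ G.verts, μ x ∈ (Cp (pt (φ x)) 0).verts := by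
    intro x hx
    exact hCpMem _ 0 _ (hpt (φ x) _ ((hex (φ x) (hφmem x hx)).choose_spec)) (hφmem x hx)
  have hμA : ∀ x ∈ G.verts, μ x ∈ (A (pt (φ x))).verts := by
    intro x hx
    exact (hAverts _ _).2 (Or.inl (hμCp x hx))
  -- the glue relation
  set E : ℕ → ℕ → Prop := fun a b =>
    (∃ x ∈ W, ∃ y ∈ W, N.Adj x y ∧ a = x + O (pt x) 0 ∧ b = y + O (pt y) 0) ∨
    (a = w ∧ ∃ x ∈ T.image φ, b = x + O (pt x) 0) with hEdef
  set Hp : NatGraph := glue A E with hHpdef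
  have hHpP : Hp ∈ P :=
    hdec.2.2.2 2 (by norm_num) A hAkc hAdisj Hp (glue_mem_starJoin E hAdisj)
  -- decoding helper for μ-values
  have hμdec : ∀ x ∈ G.verts, ∀ y, y ∈ N.verts → ∀ c : Fin 2,
      μ x = y + O (pt y) c → (y = φ x ∧ c = 0) := by
    intro x hx y hyN c he
    have h1 := hOdecode (φ x) y (pt (φ x)) (pt y) 0 c (hB _ (hφmem x hx)) (hB _ hyN) he
    exact ⟨h1.1.symm, h1.2.2.symm⟩
  have hμw : ∀ x ∈ G.verts, μ x ≠ w := by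
    intro x hx he
    rw [hwdef] at he
    have h1 := hOdecode (φ x) u (pt (φ x)) t0 0 1 (hB _ (hφmem x hx)) (hB _ huN) he
    exact absurd h1.2.2 (by simp)
  -- K1 : adjacency between images of `G`-vertices
  have hK1 : ∀ x ∈ G.verts, ∀ y ∈ G.verts, (Hp.Adj (μ x) (μ y) ↔ G.Adj x y) := by
    intro x hx y hy
    by_cases hpp : pt (φ x) = pt (φ y)
    · have hμyA : μ y ∈ (A (pt (φ x))).verts := by rw [hpp]; exact hμA y hy
      rw [hHpdef, glue_adj_same hAdisj (hμA x hx) hμyA]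
      have hμyC : μ y ∈ ((![Cp (pt (φ x)) 0, Cp (pt (φ x)) 1] : Fin 2 → NatGraph) 0).verts := by
        simp only [Matrix.cons_val_zero]
        rw [hpp]; exact hμCp y hy
      rw [disjUnion_adj_localize (hAdu (pt (φ x))) (c := 0)
        (by simp only [Matrix.cons_val_zero]; exact hμCp x hx)]
      simp only [Matrix.cons_val_zero]
      have hμy' : μ y = φ y + O (pt (φ x)) 0 := by rw [hμdef]; simp only; rw [hpp]
      rw [show μ x = φ x + O (pt (φ x)) 0 from rfl, hμy', shiftCopy_adj_iff]
      show (N.Adj (φ x) (φ y) ∧ _ ∧ _) ↔ _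
      constructor
      · intro h
        exact (hNadj x hx y hy).1 h.1
      · intro h
        refine ⟨(hNadj x hx y hy).2 h, ?_, ?_⟩
        · exact hpt (φ x) _ ((hex (φ x) (hφmem x hx)).choose_spec)
        · rw [hpp]
          exact hpt (φ y) _ ((hex (φ y) (hφmem y hy)).choose_spec)
    · rw [hHpdef, glue_adj_cross hAdisj hpp (hμA x hx) (hμA y hy)]
      constructor
      · rintro (h | h) <;> rw [hEdef] at h
        · rcases h with ⟨x', hx', y', hy', hN, ha, hb⟩ | ⟨ha, _⟩
          · obtain ⟨x'', hx'', rfl⟩ := Finset.mem_image.1 hx'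
            obtain ⟨y'', hy'', rfl⟩ := Finset.mem_image.1 hy'
            obtain ⟨he1, _⟩ := hμdec x hx _ (hφmem x'' hx'') 0 ha
            obtain ⟨he2, _⟩ := hμdec y hy _ (hφmem y'' hy'') 0 hb
            rw [he1, he2] at hN
            exact (hNadj x hx y hy).1 hN
          · exact absurd ha (hμw x hx)
        · rcases h with ⟨x', hx', y', hy', hN, ha, hb⟩ | ⟨ha, _⟩
          · obtain ⟨x'', hx'', rfl⟩ := Finset.mem_image.1 hx'
            obtain ⟨y'', hy'', rfl⟩ := Finset.mem_image.1 hy'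
            obtain ⟨he1, _⟩ := hμdec y hy _ (hφmem x'' hx'') 0 ha
            obtain ⟨he2, _⟩ := hμdec x hx _ (hφmem y'' hy'') 0 hb
            rw [he1] at hN
            rw [he2] at hN
            exact (hNadj x hx y hy).1 (N.symm _ _ hN)
          · exact absurd ha (hμw y hy)
      · intro h
        refine Or.inl ?_
        rw [hEdef]
        exact Or.inl ⟨φ x, Finset.mem_image_of_mem φ hx, φ y,
          Finset.mem_image_of_mem φ hy, (hNadj x hx y hy).2 h, rfl, rfl⟩
  -- K2 : adjacency between `w` and images
  have hK2 : ∀ x ∈ G.verts, (Hp.Adj w (μ x) ↔ x ∈ T) := by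
    intro x hx
    by_cases hpp : pt (φ x) = t0
    · have hxT : x ∉ T := by
        intro hxT
        have : φ x ∈ T.image φ ∩ V t0 := by
          refine Finset.mem_inter.2 ⟨Finset.mem_image_of_mem φ hxT, ?_⟩
          rw [← hpp]
          exact hpt (φ x) _ ((hex (φ x) (hφmem x hx)).choose_spec)
        rw [hne0] at this
        simp at this
      have hμA' : μ x ∈ (A t0).verts := by rw [← hpp]; exact hμA x hx
      rw [hHpdef, glue_adj_same hAdisj hwA hμA']
      refine iff_of_false ?_ hxT
      intro hadj
      rw [(hAdu t0).2.2] at hadj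
      obtain ⟨j, hj⟩ := hadj
      obtain ⟨h1, h2⟩ := ((![Cp t0 0, Cp t0 1] : Fin 2 → NatGraph) j).mem_of_adj _ _ hj
      fin_cases j <;>
        simp only [Matrix.cons_val_zero, Matrix.cons_val_one, Matrix.head_cons] at h1 h2
      · -- j = 0 : w ∈ Cp t0 0 impossible
        exact Finset.disjoint_left.1 (hCpDisj t0 t0 1 0 (by simp)) hwmem h1
      · -- j = 1 : μ x ∈ Cp t0 1 impossible
        have : μ x ∈ (Cp (pt (φ x)) 0).verts := hμCp x hx
        rw [hpp] at this
        exact Finset.disjoint_left.1 (hCpDisj t0 t0 0 1 (by simp)) this h2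
    · rw [hHpdef, glue_adj_cross hAdisj (fun h => hpp h.symm) hwA (hμA x hx)]
      constructor
      · rintro (h | h) <;> rw [hEdef] at h
        · rcases h with ⟨x', hx', y', hy', hN, ha, hb⟩ | ⟨_, x', hx', hb⟩
          · -- w cannot be of the first-copy form
            exfalso
            obtain ⟨x'', hx'', rfl⟩ := Finset.mem_image.1 hx'
            rw [hwdef] at ha
            have h1 := hOdecode u (φ x'') t0 (pt (φ x'')) 1 0 (hB _ huN)
              (hB _ (hφmem x'' hx'')) ha
            exact absurd h1.2.2 (by simp)
          · obtain ⟨x'', hx'', rfl⟩ := Finset.mem_image.1 hx'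
            obtain ⟨he1, _⟩ := hμdec x hx _ (hφmem x'' (hTsub hx'')) 0 hb
            have : x'' = x := hφinj (by exact_mod_cast hTsub hx'')
              (by exact_mod_cast hx) he1
            rw [← this]
            exact hx''
        · rcases h with ⟨x', hx', y', hy', hN, ha, hb⟩ | ⟨ha, _⟩
          · exfalso
            obtain ⟨y'', hy'', rfl⟩ := Finset.mem_image.1 hy'
            rw [hwdef] at hb
            have h1 := hOdecode u (φ y'') t0 (pt (φ y'')) 1 0 (hB _ huN)
              (hB _ (hφmem y'' hy'')) hb
            exact absurd h1.2.2 (by simp)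
          · exact absurd ha (hμw x hx)
      · intro hxT
        refine Or.inl ?_
        rw [hEdef]
        exact Or.inr ⟨rfl, φ x, Finset.mem_image_of_mem φ hxT, rfl⟩
  -- conclude via the generic embedding
  refine witness_embed hP hHP hv hHverts hagree hTadj ?_ ?_ ?_ hμw hK1 hK2 hHpP
  · -- injectivity of μ
    intro x hx y hy he
    have h1 := hOdecode (φ x) (φ y) (pt (φ x)) (pt (φ y)) 0 0
      (hB _ (hφmem x (by exact_mod_cast hx))) (hB _ (hφmem y (by exact_mod_cast hy))) he
    exact hφinj hx hy h1.1
  · -- w ∈ Hp.verts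
    show w ∈ (glue A E).verts
    exact Finset.mem_biUnion.2 ⟨t0, Finset.mem_univ t0, hwA⟩
  · -- μ maps into Hp.verts
    intro x hx
    show μ x ∈ (glue A E).verts
    exact Finset.mem_biUnion.2 ⟨pt (φ x), Finset.mem_univ _, hμA x hx⟩

/-! ### Consistent splittings of finite families -/

lemma fin2_cases (c : Fin 2) : c = 0 ∨ c = 1 := by
  fin_cases c
  · exact Or.inl rfl
  · exact Or.inr rfl

/-- An induced copy inside a disjoint union, with its explicit map. -/
lemma piece_isoVia {k : ℕ} {K : NatGraph} {C : Fin k → NatGraph} (h : IsDisjUnion K C)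
    (c : Fin k) {X : NatGraph} {f : ℕ → ℕ} (hf : X.IsoVia (C c) f) :
    X.IsoVia (K.induce (X.verts.image f)) f ∧ X.verts.image f ⊆ K.verts := by
  have himg : X.verts.image f = (C c).verts := by
    apply Finset.coe_injective
    rw [Finset.coe_image]
    exact hf.1.image_eq
  have hsub : (C c).verts ⊆ K.verts := by
    rw [h.2.1]
    intro x hx
    exact Finset.mem_biUnion.2 ⟨c, Finset.mem_univ c, hx⟩
  have hverts : (K.induce (X.verts.image f)).verts = (C c).verts := by
    show K.verts ∩ _ = _
    rw [himg]
    exact Finset.inter_eq_right.2 hsub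
  refine ⟨⟨?_, ?_⟩, himg ▸ hsub⟩
  · rw [show ((K.induce (X.verts.image f)).verts : Set ℕ) = ((C c).verts : Set ℕ)
      from Finset.coe_inj.2 hverts]
    exact hf.1
  · intro a ha b hb
    rw [hf.2 a ha b hb]
    have hfa : f a ∈ (C c).verts := by exact_mod_cast hf.1.1 (by exact_mod_cast ha)
    have hfb : f b ∈ (C c).verts := by exact_mod_cast hf.1.1 (by exact_mod_cast hb)
    show (C c).Adj (f a) (f b) ↔ (K.Adj (f a) (f b) ∧ _ ∧ _)
    constructor
    · intro hadj
      exact ⟨(h.2.2 _ _).2 ⟨c, hadj⟩, himg ▸ hfa, himg ▸ hfb⟩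
    · rintro ⟨hadj, _, _⟩
      exact (disjUnion_adj_localize h hfa).1 hadj

/-- A two-block splitting of a family `𝒮`, induced by a `P`-decomposition of
a single ambient graph with induced copies of all members. -/
def Consistent (P : Set NatGraph) (𝒮 : Set NatGraph)
    (τ : NatGraph → Finset ℕ × Finset ℕ) : Prop :=
  ∃ (N : NatGraph) (m : ℕ) (V : Fin m → Finset ℕ) (cmap : Fin m → Fin 2)
    (ρ : NatGraph → ℕ → ℕ),
    IsDecomp P N V ∧ Function.Surjective cmap ∧
    ∀ F ∈ 𝒮, F.IsoVia (N.induce (F.verts.image (ρ F))) (ρ F) ∧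
      F.verts.image (ρ F) ⊆ N.verts ∧
      (τ F).1 ∪ (τ F).2 = F.verts ∧ Disjoint (τ F).1 (τ F).2 ∧
      (∀ x ∈ (τ F).1, ∃ t, cmap t = 0 ∧ ρ F x ∈ V t) ∧
      (∀ x ∈ (τ F).2, ∃ t, cmap t = 1 ∧ ρ F x ∈ V t)

lemma consistent_exists {P : Set NatGraph} (hP : IsAIH P)
    {G Hh : NatGraph} {v : ℕ} {T : Finset ℕ} (hGP : G ∈ P) (hHP : Hh ∉ P)
    (hv : v ∉ G.verts) (hHverts : Hh.verts = insert v G.verts)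
    (hagree : ∀ a ∈ G.verts, ∀ b ∈ G.verts, (Hh.Adj a b ↔ G.Adj a b))
    (hTsub : T ⊆ G.verts)
    (hTadj : ∀ a ∈ G.verts, (Hh.Adj v a ↔ a ∈ T))
    (hdecAll : ∀ N, Strict P N → ∃ (m : ℕ) (V : Fin m → Finset ℕ),
      2 ≤ m ∧ IsDecomp P N V)
    (𝒮 : Set NatGraph) (h𝒮P : 𝒮 ⊆ P) (h𝒮 : 𝒮.Finite) :
    ∃ τ, Consistent P 𝒮 τ := by
  classical
  set s : Finset NatGraph := h𝒮.toFinset with hsdef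
  set p : ℕ := s.card with hpdef
  set e : Fin p → NatGraph := fun i => (s.equivFin.symm i).1 with hedef
  have he𝒮 : ∀ i, e i ∈ 𝒮 := by
    intro i
    have h2 := (s.equivFin.symm i).2
    rw [← h𝒮.mem_toFinset]
    exact h2
  set Fam : Fin (p+1) → NatGraph := fun i =>
    if h : i.val < p then e ⟨i.val, h⟩ else G with hFamdef
  have hFamP : ∀ i, Fam i ∈ P := by
    intro i
    rw [hFamdef]
    dsimp only
    split
    · exact h𝒮P (he𝒮 _)
    · exact hGP
  set B : ℕ := Finset.univ.sup (fun i : Fin (p+1) => (Fam i).verts.sup id) with hBdef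
  have hBi : ∀ i, (Fam i).verts.sup id ≤ B := fun i =>
    Finset.le_sup (f := fun i : Fin (p+1) => (Fam i).verts.sup id) (Finset.mem_univ i)
  set o : Fin (p+1) → ℕ := fun i => i.val * (B+1) with hodef
  set C : Fin (p+1) → NatGraph := fun i => shiftCopy (Fam i) (o i) with hCdef
  have hCdisj : ∀ i j, i ≠ j → Disjoint (C i).verts (C j).verts := by
    intro i j hij
    have hvv : i.val ≠ j.val := fun h => hij (Fin.ext h)
    rcases Nat.lt_trichotomy i.val j.val with hlt | he | hlt
    · exact shiftCopy_disjoint (hBi i) (offset_lt _ _ hlt)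
    · exact absurd he hvv
    · exact (shiftCopy_disjoint (hBi j) (offset_lt _ _ hlt)).symm
  set N : NatGraph := punion C (p+1) with hNdef
  have hNdu : IsDisjUnion N C := punion_isDisjUnion C hCdisj
  have hNP : N ∈ P := by
    refine disjUnion_mem hP ?_ hCdisj hNdu
    intro c
    exact hP.1.2.2 _ _ (shiftCopy_iso _ _) (hFamP c)
  have hlastG : Fam (Fin.last p) = G := by
    rw [hFamdef]
    simp
  have hGiso : G.IsoVia (C (Fin.last p)) (· + o (Fin.last p)) := by
    show G.IsoVia (shiftCopy (Fam (Fin.last p)) (o (Fin.last p))) (· + o (Fin.last p))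
    rw [hlastG]
    exact shiftCopy_isoVia G _
  obtain ⟨hGiso', hGsub⟩ := piece_isoVia hNdu (Fin.last p) hGiso
  have hNstrict : Strict P N :=
    strict_of_contains hP hNP hGiso' hGsub hHP hv hHverts hagree hTsub hTadj
  obtain ⟨m, V, hm2, hdec⟩ := hdecAll N hNstrict
  set cmap : Fin m → Fin 2 := fun t => if t.val = 0 then 0 else 1 with hcmapdef
  have hcsurj : Function.Surjective cmap := by
    intro b
    rcases fin2_cases b with rfl | rfl
    · exact ⟨⟨0, by omega⟩, by simp [hcmapdef]⟩
    · exact ⟨⟨1, by omega⟩, by simp [hcmapdef]⟩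
  set ρ : NatGraph → ℕ → ℕ := fun F x =>
    if h : F ∈ s then x + o (s.equivFin ⟨F, h⟩).castSucc else x with hρdef
  have hρcopy : ∀ F ∈ 𝒮, F.IsoVia (N.induce (F.verts.image (ρ F))) (ρ F) ∧
      F.verts.image (ρ F) ⊆ N.verts := by
    intro F hF
    have hFs : F ∈ s := by rw [← h𝒮.mem_toFinset] at hF; exact hF
    have hFam : Fam (s.equivFin ⟨F, hFs⟩).castSucc = F := by
      show (if h : ((s.equivFin ⟨F, hFs⟩).castSucc).val < p then
        e ⟨((s.equivFin ⟨F, hFs⟩).castSucc).val, h⟩ else G) = F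
      have hlt : ((s.equivFin ⟨F, hFs⟩).castSucc).val < p := by
        rw [Fin.coe_castSucc]
        exact (s.equivFin ⟨F, hFs⟩).isLt
      rw [dif_pos hlt]
      have hcast : (⟨((s.equivFin ⟨F, hFs⟩).castSucc).val, hlt⟩ : Fin p)
          = s.equivFin ⟨F, hFs⟩ := Fin.ext (by rw [Fin.coe_castSucc])
      rw [hcast]
      show ((s.equivFin.symm (s.equivFin ⟨F, hFs⟩)) : NatGraph) = F
      rw [Equiv.symm_apply_apply]
    have hρeq : ρ F = fun x => x + o (s.equivFin ⟨F, hFs⟩).castSucc := by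
      funext x
      show (if h : F ∈ s then x + o ((s.equivFin ⟨F, h⟩).castSucc) else x) = _
      rw [dif_pos hFs]
    have hiso : F.IsoVia (C (s.equivFin ⟨F, hFs⟩).castSucc) (ρ F) := by
      rw [hρeq]
      show F.IsoVia (shiftCopy (Fam (s.equivFin ⟨F, hFs⟩).castSucc)
        (o (s.equivFin ⟨F, hFs⟩).castSucc)) _
      rw [hFam]
      exact shiftCopy_isoVia F _
    exact piece_isoVia hNdu (s.equivFin ⟨F, hFs⟩).castSucc hiso
  refine ⟨fun F => (F.verts.filter (fun x => ∃ t, cmap t = 0 ∧ ρ F x ∈ V t),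
      F.verts.filter (fun x => ¬∃ t, cmap t = 0 ∧ ρ F x ∈ V t)),
    N, m, V, cmap, ρ, hdec, hcsurj, ?_⟩
  intro F hF
  obtain ⟨hiso, hsub⟩ := hρcopy F hF
  refine ⟨hiso, hsub, Finset.filter_union_filter_not_eq _ _,
    Finset.disjoint_filter_filter_not _ _ _, ?_, ?_⟩
  · intro x hx
    exact (Finset.mem_filter.1 hx).2
  · intro x hx
    obtain ⟨hxF, hnot⟩ := Finset.mem_filter.1 hx
    have hρN : ρ F x ∈ N.verts := hsub (Finset.mem_image_of_mem _ hxF)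
    have hex : ∃ t, ρ F x ∈ V t := by
      rw [← hdec.2.2.1] at hρN
      obtain ⟨t, _, ht⟩ := Finset.mem_biUnion.1 hρN
      exact ⟨t, ht⟩
    obtain ⟨t, ht⟩ := hex
    rcases fin2_cases (cmap t) with hc | hc
    · exact absurd ⟨t, hc, ht⟩ hnot
    · exact ⟨t, hc, ht⟩

/-! ### Compactness: a single global splitting -/

lemma ultra_cell {α : Type} (𝒰 : Ultrafilter (Set NatGraph))
    (f : Set NatGraph → α) (s : Finset α)
    (hs : {𝒮 | f 𝒮 ∈ s} ∈ 𝒰) : ∃ x ∈ s, {𝒮 | f 𝒮 = x} ∈ 𝒰 := by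
  classical
  induction s using Finset.induction with
  | empty =>
    exfalso
    have : {𝒮 | f 𝒮 ∈ (∅ : Finset α)} = (∅ : Set (Set NatGraph)) := by
      ext x; simp
    rw [this] at hs
    exact Ultrafilter.empty_notMem hs
  | @insert a s ha ih =>
    have : {𝒮 | f 𝒮 ∈ insert a s} = {𝒮 | f 𝒮 = a} ∪ {𝒮 | f 𝒮 ∈ s} := by
      ext x; simp [Finset.mem_insert]
    rw [this, Ultrafilter.union_mem_iff] at hs
    rcases hs with h | h
    · exact ⟨a, Finset.mem_insert_self a s, h⟩
    · obtain ⟨x, hx, hx'⟩ := ih h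
      exact ⟨x, Finset.mem_insert_of_mem hx, hx'⟩

lemma exists_sigma {P : Set NatGraph}
    (hCons : ∀ 𝒮 : Set NatGraph, 𝒮 ⊆ P → 𝒮.Finite → ∃ τ, Consistent P 𝒮 τ) :
    ∃ σ : NatGraph → Finset ℕ × Finset ℕ,
      ∀ 𝒮₀ : Set NatGraph, 𝒮₀ ⊆ P → 𝒮₀.Finite →
        ∃ 𝒮 τ, 𝒮₀ ⊆ 𝒮 ∧ 𝒮 ⊆ P ∧ 𝒮.Finite ∧ Consistent P 𝒮 τ ∧
          ∀ F ∈ 𝒮₀, τ F = σ F := by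
  classical
  set cτ : Set NatGraph → (NatGraph → Finset ℕ × Finset ℕ) := fun 𝒮 =>
    if h : 𝒮 ⊆ P ∧ 𝒮.Finite then (hCons 𝒮 h.1 h.2).choose else fun _ => (∅, ∅)
    with hcτdef
  have hcτ : ∀ 𝒮, 𝒮 ⊆ P → 𝒮.Finite → Consistent P 𝒮 (cτ 𝒮) := by
    intro 𝒮 h1 h2
    show Consistent P 𝒮 (if h : 𝒮 ⊆ P ∧ 𝒮.Finite then (hCons 𝒮 h.1 h.2).choose
      else fun _ => (∅, ∅))
    rw [dif_pos ⟨h1, h2⟩]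
    exact (hCons 𝒮 h1 h2).choose_spec
  set gens : Set (Set (Set NatGraph)) := {A | ∃ 𝒮₀ : Set NatGraph, 𝒮₀ ⊆ P ∧ 𝒮₀.Finite ∧
    A = {𝒮 | 𝒮₀ ⊆ 𝒮 ∧ 𝒮 ⊆ P ∧ 𝒮.Finite}} with hgensdef
  have hNeBot : (Filter.generate gens).NeBot := by
    rw [Filter.generate_neBot_iff]
    intro t ht hfin
    set base : Set (Set NatGraph) → Set NatGraph := fun X =>
      if hX : X ∈ gens then hX.choose else ∅ with hbasedef
    have hbase : ∀ X ∈ t, base X ⊆ P ∧ (base X).Finite ∧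
        X = {𝒮 | base X ⊆ 𝒮 ∧ 𝒮 ⊆ P ∧ 𝒮.Finite} := by
      intro X hX
      have hXg : X ∈ gens := ht hX
      have : base X = hXg.choose := by
        show (if hX' : X ∈ gens then hX'.choose else ∅) = _
        rw [dif_pos hXg]
      rw [this]
      exact hXg.choose_spec
    refine ⟨⋃ X ∈ t, base X, ?_⟩
    intro X hX
    rw [(hbase X hX).2.2]
    refine ⟨?_, ?_, ?_⟩
    · exact Set.subset_biUnion_of_mem hX
    · intro F hF
      simp only [Set.mem_iUnion] at hF
      obtain ⟨Y, hY, hFY⟩ := hF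
      exact (hbase Y hY).1 hFY
    · exact Set.Finite.biUnion hfin (fun Y hY => (hbase Y hY).2.1)
  haveI := hNeBot
  set 𝒰 : Ultrafilter (Set NatGraph) := Ultrafilter.of (Filter.generate gens) with h𝒰def
  have hgen𝒰 : ∀ A ∈ gens, A ∈ 𝒰 := fun A hA =>
    (Ultrafilter.of_le _) (Filter.mem_generate_of_mem hA)
  have hσex : ∀ F, F ∈ P →
      ∃ x ∈ F.verts.powerset ×ˢ F.verts.powerset, {𝒮 | cτ 𝒮 F = x} ∈ 𝒰 := by
    intro F hF
    apply ultra_cell 𝒰 (fun 𝒮 => cτ 𝒮 F)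
    have hA : {𝒮 | {F} ⊆ 𝒮 ∧ 𝒮 ⊆ P ∧ 𝒮.Finite} ∈ 𝒰 :=
      hgen𝒰 _ ⟨{F}, by simpa using hF, Set.finite_singleton F, rfl⟩
    refine Filter.mem_of_superset hA ?_
    rintro 𝒮 ⟨hsub, hP', hfin⟩
    obtain ⟨N, m, V, cmap, ρ, hdec, hcsurj, hmem⟩ := hcτ 𝒮 hP' hfin
    have hF𝒮 : F ∈ 𝒮 := hsub rfl
    obtain ⟨_, _, hunion, _, _, _⟩ := hmem F hF𝒮
    show cτ 𝒮 F ∈ F.verts.powerset ×ˢ F.verts.powerset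
    rw [Finset.mem_product]
    constructor <;> rw [Finset.mem_powerset] <;> intro x hx <;> rw [← hunion]
    · exact Finset.mem_union_left _ hx
    · exact Finset.mem_union_right _ hx
  set σ : NatGraph → Finset ℕ × Finset ℕ := fun F =>
    if hF : F ∈ P then (hσex F hF).choose else (∅, ∅) with hσdef
  have hσ𝒰 : ∀ F, F ∈ P → {𝒮 | cτ 𝒮 F = σ F} ∈ 𝒰 := by
    intro F hF
    have : σ F = (hσex F hF).choose := by
      show (if hF' : F ∈ P then (hσex F hF').choose else (∅, ∅)) = _
      rw [dif_pos hF]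
    rw [this]
    exact (hσex F hF).choose_spec.2
  refine ⟨σ, ?_⟩
  intro 𝒮₀ h1 h2
  have hA : {𝒮 | 𝒮₀ ⊆ 𝒮 ∧ 𝒮 ⊆ P ∧ 𝒮.Finite} ∈ 𝒰 := hgen𝒰 _ ⟨𝒮₀, h1, h2, rfl⟩
  have hB : (⋂ F ∈ 𝒮₀, {𝒮 | cτ 𝒮 F = σ F}) ∈ 𝒰 :=
    (Filter.biInter_mem h2).2 (fun F hF => hσ𝒰 F (h1 hF))
  have hAB : ({𝒮 | 𝒮₀ ⊆ 𝒮 ∧ 𝒮 ⊆ P ∧ 𝒮.Finite} ∩ ⋂ F ∈ 𝒮₀, {𝒮 | cτ 𝒮 F = σ F}) ∈ 𝒰 :=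
    Filter.inter_mem hA hB
  obtain ⟨𝒮, h𝒮⟩ := Filter.nonempty_of_mem hAB
  obtain ⟨⟨hsub, hP', hfin⟩, hvals⟩ := h𝒮
  refine ⟨𝒮, cτ 𝒮, hsub, hP', hfin, hcτ 𝒮 hP' hfin, ?_⟩
  intro F hF
  exact Set.mem_iInter₂.1 hvals F hF

/-! ### The factor classes -/

lemma piece_subset {k : ℕ} {K : NatGraph} {C : Fin k → NatGraph} (h : IsDisjUnion K C)
    (c : Fin k) : (C c).verts ⊆ K.verts := by
  rw [h.2.1]
  intro x hx
  exact Finset.mem_biUnion.2 ⟨c, Finset.mem_univ c, hx⟩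

lemma single_disjUnion (X : NatGraph) : IsDisjUnion X (fun _ : Fin 1 => X) := by
  refine ⟨?_, ?_, ?_⟩
  · intro i j hij
    exact absurd (Subsingleton.elim i j) hij
  · ext x; simp
  · intro a b
    constructor
    · intro h; exact ⟨0, h⟩
    · rintro ⟨_, h⟩; exact h

/-- The factor class determined by a global splitting `σ` and a side `b`. -/
def SideClass (P : Set NatGraph) (σ : NatGraph → Finset ℕ × Finset ℕ) (b : Fin 2) :
    Set NatGraph :=
  {X | ∃ (p : ℕ) (D : Fin p → NatGraph), IsDisjUnion X D ∧
    ∀ c, ∃ F ∈ P, (D c).Le (F.induce (if b = 0 then (σ F).1 else (σ F).2))}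

lemma sideClass_null {P σ b} : nullGraph ∈ SideClass P σ b := by
  refine ⟨0, Fin.elim0, ⟨?_, ?_, ?_⟩, ?_⟩
  · intro i; exact i.elim0
  · show (∅ : Finset ℕ) = _
    simp
  · intro a b
    constructor
    · intro h; exact h.elim
    · rintro ⟨j, _⟩; exact j.elim0
  · intro c; exact c.elim0

lemma sideClass_iso_closed {P σ b} :
    ∀ X X', X.Iso X' → X ∈ SideClass P σ b → X' ∈ SideClass P σ b := by
  rintro X X' ⟨ψ, hψ⟩ ⟨p, D, hdu, hLe⟩
  have hψinj := hψ.1.2.1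
  have himg : X'.verts = X.verts.image ψ := by
    apply Finset.coe_injective
    rw [Finset.coe_image]
    exact hψ.1.image_eq.symm
  refine ⟨p, fun c => X'.induce ((D c).verts.image ψ), ⟨?_, ?_, ?_⟩, ?_⟩
  · -- disjointness
    intro i j hij
    have h1 : (X'.induce ((D i).verts.image ψ)).verts ⊆ (D i).verts.image ψ := by
      show X'.verts ∩ _ ⊆ _
      exact Finset.inter_subset_right
    have h2 : (X'.induce ((D j).verts.image ψ)).verts ⊆ (D j).verts.image ψ := by
      show X'.verts ∩ _ ⊆ _
      exact Finset.inter_subset_right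
    refine Finset.disjoint_left.2 ?_
    intro x hx hx'
    obtain ⟨a, ha, rfl⟩ := Finset.mem_image.1 (h1 hx)
    obtain ⟨a', ha', hee⟩ := Finset.mem_image.1 (h2 hx')
    have haX : a ∈ X.verts := piece_subset hdu i ha
    have haX' : a' ∈ X.verts := piece_subset hdu j ha'
    have : a' = a := hψinj (by exact_mod_cast haX') (by exact_mod_cast haX) hee
    rw [this] at ha'
    exact Finset.disjoint_left.1 (hdu.1 i j hij) ha ha'
  · -- verts
    ext x
    simp only [Finset.mem_biUnion, Finset.mem_univ, true_and]
    constructor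
    · intro hx
      have : x ∈ X.verts.image ψ := himg ▸ hx
      obtain ⟨a, ha, rfl⟩ := Finset.mem_image.1 this
      have : a ∈ Finset.univ.biUnion (fun c => (D c).verts) := hdu.2.1 ▸ ha
      obtain ⟨c, _, hc⟩ := Finset.mem_biUnion.1 this
      refine ⟨c, ?_⟩
      show ψ a ∈ X'.verts ∩ _
      exact Finset.mem_inter.2 ⟨hx, Finset.mem_image_of_mem ψ hc⟩
    · rintro ⟨c, hc⟩
      exact (Finset.mem_inter.1 hc).1
  · -- adjacency
    intro a b
    constructor
    · intro hab
      obtain ⟨haX', hbX'⟩ := X'.mem_of_adj a b hab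
      obtain ⟨x, hx, rfl⟩ : ∃ x ∈ X.verts, ψ x = a := by
        have : a ∈ X.verts.image ψ := himg ▸ haX'
        obtain ⟨x, hx, hxa⟩ := Finset.mem_image.1 this
        exact ⟨x, hx, hxa⟩
      obtain ⟨y, hy, rfl⟩ : ∃ y ∈ X.verts, ψ y = b := by
        have : b ∈ X.verts.image ψ := himg ▸ hbX'
        obtain ⟨y, hy, hyb⟩ := Finset.mem_image.1 this
        exact ⟨y, hy, hyb⟩
      have hXadj : X.Adj x y := (hψ.2 x hx y hy).2 hab
      obtain ⟨c, hc⟩ := (hdu.2.2 x y).1 hXadj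
      obtain ⟨hxc, hyc⟩ := (D c).mem_of_adj x y hc
      refine ⟨c, ?_⟩
      exact ⟨hab, Finset.mem_image_of_mem ψ hxc, Finset.mem_image_of_mem ψ hyc⟩
    · rintro ⟨c, hc⟩
      exact hc.1
  · -- pieces
    intro c
    obtain ⟨F, hFP, hFLe⟩ := hLe c
    refine ⟨F, hFP, ?_⟩
    have hsub : (D c).verts ⊆ X.verts := piece_subset hdu c
    have hiso1 : (D c).Iso (X.induce (D c).verts) := piece_induced hdu c
    have hiso2 : (X.induce (D c).verts).Iso (X'.induce ((D c).verts.image ψ)) :=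
      iso_restrict hψ hsub
    have : (X'.induce ((D c).verts.image ψ)).Iso (D c) :=
      iso_symm (iso_trans hiso1 hiso2)
    exact le_of_iso_le this hFLe

lemma sideClass_hered {P σ b} : IndHer (SideClass P σ b) := by
  rintro X Y ⟨p, D, hdu, hLe⟩ ⟨U, hU, hYiso⟩
  refine sideClass_iso_closed _ _ (iso_symm hYiso) ⟨p, fun c => (D c).induce U,
    ⟨?_, ?_, ?_⟩, ?_⟩
  · intro i j hij
    refine Finset.disjoint_of_subset_left ?_ (Finset.disjoint_of_subset_right ?_
      (hdu.1 i j hij))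
    · exact Finset.inter_subset_left
    · exact Finset.inter_subset_left
  · show X.verts ∩ U = _
    ext x
    simp only [Finset.mem_inter, Finset.mem_biUnion, Finset.mem_univ, true_and]
    constructor
    · rintro ⟨hx, hxU⟩
      have : x ∈ Finset.univ.biUnion (fun c => (D c).verts) := hdu.2.1 ▸ hx
      obtain ⟨c, _, hc⟩ := Finset.mem_biUnion.1 this
      exact ⟨c, Finset.mem_inter.2 ⟨hc, hxU⟩⟩
    · rintro ⟨c, hc⟩
      obtain ⟨h1, h2⟩ := Finset.mem_inter.1 hc
      exact ⟨piece_subset hdu c h1, h2⟩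
  · intro a b
    constructor
    · rintro ⟨hab, haU, hbU⟩
      obtain ⟨c, hc⟩ := (hdu.2.2 a b).1 hab
      exact ⟨c, hc, haU, hbU⟩
    · rintro ⟨c, hc, haU, hbU⟩
      exact ⟨(hdu.2.2 a b).2 ⟨c, hc⟩, haU, hbU⟩
  · intro c
    obtain ⟨F, hFP, hFLe⟩ := hLe c
    exact ⟨F, hFP, le_trans' (le_induce (D c) U) hFLe⟩

lemma sideClass_additive {P σ b} : Additive' (SideClass P σ b) := by
  rintro X₀ X₁ K ⟨p₀, D₀, hdu₀, hLe₀⟩ ⟨p₁, D₁, hdu₁, hLe₁⟩ hK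
  have hd01 : Disjoint X₀.verts X₁.verts := by
    have := hK.1 0 1 (by simp)
    simpa using this
  have hKverts : K.verts = X₀.verts ∪ X₁.verts := by
    rw [hK.2.1]
    ext x
    simp [Fin.exists_fin_two]
  have hKadj : ∀ a b, K.Adj a b ↔ X₀.Adj a b ∨ X₁.Adj a b := by
    intro a b
    rw [hK.2.2 a b, Fin.exists_fin_two]
    simp
  set D : Fin (p₀ + p₁) → NatGraph := fun c =>
    if h : c.val < p₀ then D₀ ⟨c.val, h⟩
    else D₁ ⟨c.val - p₀, by have := c.isLt; omega⟩ with hDdef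
  have hDval : ∀ (c : Fin (p₀ + p₁)) (h : c.val < p₀), D c = D₀ ⟨c.val, h⟩ := by
    intro c h
    show dite _ _ _ = _
    rw [dif_pos h]
  have hDval' : ∀ (c : Fin (p₀ + p₁)) (h : ¬ c.val < p₀),
      D c = D₁ ⟨c.val - p₀, by have := c.isLt; omega⟩ := by
    intro c h
    show dite _ _ _ = _
    rw [dif_neg h]
  have hDval'' : ∀ (c : Fin (p₀ + p₁)) (h : ¬ c.val < p₀) (c' : Fin p₁),
      c'.val = c.val - p₀ → D c = D₁ c' := by
    intro c h c' hc'
    rw [hDval' c h]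
    congr 1
    exact Fin.ext hc'.symm
  have hDsub : ∀ c, (D c).verts ⊆ X₀.verts ∪ X₁.verts := by
    intro c
    by_cases h : c.val < p₀
    · rw [hDval c h]
      exact (piece_subset hdu₀ _).trans Finset.subset_union_left
    · rw [hDval' c h]
      exact (piece_subset hdu₁ _).trans Finset.subset_union_right
  refine ⟨p₀ + p₁, D, ⟨?_, ?_, ?_⟩, ?_⟩
  · intro i j hij
    by_cases hi : i.val < p₀ <;> by_cases hj : j.val < p₀
    · rw [hDval i hi, hDval j hj]
      exact hdu₀.1 _ _ (by intro h; apply hij; exact Fin.ext (by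
        have := congrArg Fin.val h; simpa using this))
    · rw [hDval i hi, hDval' j hj]
      exact Finset.disjoint_of_subset_left (piece_subset hdu₀ _)
        (Finset.disjoint_of_subset_right (piece_subset hdu₁ _) hd01)
    · rw [hDval' i hi, hDval j hj]
      exact Finset.disjoint_of_subset_left (piece_subset hdu₁ _)
        (Finset.disjoint_of_subset_right (piece_subset hdu₀ _) hd01.symm)
    · rw [hDval' i hi, hDval' j hj]
      exact hdu₁.1 _ _ (by intro h; apply hij; exact Fin.ext (by
        have := congrArg Fin.val h; simp at this; omega))
  · rw [hKverts]
    ext x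
    simp only [Finset.mem_union, Finset.mem_biUnion, Finset.mem_univ, true_and]
    constructor
    · rintro (hx | hx)
      · have : x ∈ Finset.univ.biUnion (fun c => (D₀ c).verts) := hdu₀.2.1 ▸ hx
        obtain ⟨c, _, hc⟩ := Finset.mem_biUnion.1 this
        refine ⟨⟨c.val, by have := c.isLt; omega⟩, ?_⟩
        rw [hDval _ (by exact c.isLt)]
        simpa using hc
      · have : x ∈ Finset.univ.biUnion (fun c => (D₁ c).verts) := hdu₁.2.1 ▸ hx
        obtain ⟨c, _, hc⟩ := Finset.mem_biUnion.1 this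
        refine ⟨⟨p₀ + c.val, by have := c.isLt; omega⟩, ?_⟩
        rw [hDval'' _ (by show ¬ (p₀ + c.val < p₀); omega) c
          (by show c.val = p₀ + c.val - p₀; omega)]
        exact hc
    · rintro ⟨c, hc⟩
      have := hDsub c hc
      simpa using this
  · intro a b
    rw [hKadj a b]
    constructor
    · rintro (h | h)
      · obtain ⟨c, hc⟩ := (hdu₀.2.2 a b).1 h
        refine ⟨⟨c.val, by have := c.isLt; omega⟩, ?_⟩
        rw [hDval _ (by exact c.isLt)]
        simpa using hc
      · obtain ⟨c, hc⟩ := (hdu₁.2.2 a b).1 h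
        refine ⟨⟨p₀ + c.val, by have := c.isLt; omega⟩, ?_⟩
        rw [hDval'' _ (by show ¬ (p₀ + c.val < p₀); omega) c
          (by show c.val = p₀ + c.val - p₀; omega)]
        exact hc
    · rintro ⟨c, hc⟩
      by_cases h : c.val < p₀
      · rw [hDval c h] at hc
        exact Or.inl ((hdu₀.2.2 a b).2 ⟨_, hc⟩)
      · rw [hDval' c h] at hc
        exact Or.inr ((hdu₁.2.2 a b).2 ⟨_, hc⟩)
  · intro c
    by_cases h : c.val < p₀
    · rw [hDval c h]; exact hLe₀ _
    · rw [hDval' c h]; exact hLe₁ _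

lemma sideClass_AIH {P : Set NatGraph} {σ : NatGraph → Finset ℕ × Finset ℕ} {b : Fin 2}
    (hmem : ∃ F ∈ P, (F.verts ∩ (if b = 0 then (σ F).1 else (σ F).2)).Nonempty) :
    IsAIH (SideClass P σ b) := by
  obtain ⟨F, hFP, hFne⟩ := hmem
  refine ⟨⟨sideClass_null, ?_, sideClass_iso_closed⟩, sideClass_hered,
    sideClass_additive⟩
  refine ⟨F.induce (if b = 0 then (σ F).1 else (σ F).2), ?_, hFne⟩
  exact ⟨1, fun _ => F.induce _, single_disjUnion _, fun _ => ⟨F, hFP, le_refl' _⟩⟩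

/-! ### P is contained in the product of the side classes -/

lemma subset_prod {P : Set NatGraph} {σ : NatGraph → Finset ℕ × Finset ℕ}
    (hσ : ∀ 𝒮₀ : Set NatGraph, 𝒮₀ ⊆ P → 𝒮₀.Finite →
      ∃ 𝒮 τ, 𝒮₀ ⊆ 𝒮 ∧ 𝒮 ⊆ P ∧ 𝒮.Finite ∧ Consistent P 𝒮 τ ∧
        ∀ F ∈ 𝒮₀, τ F = σ F) :
    P ⊆ ProdProp ![SideClass P σ 0, SideClass P σ 1] := by
  intro F hF
  obtain ⟨𝒮, τ, hsub, h𝒮P, hfin, hcons, hagr⟩ :=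
    hσ {F} (by simpa using hF) (Set.finite_singleton F)
  obtain ⟨N, m, V, cmap, ρ, hdec, hcsurj, hmem⟩ := hcons
  have hF𝒮 : F ∈ 𝒮 := hsub rfl
  obtain ⟨_, _, hunion, hdisj, _, _⟩ := hmem F hF𝒮
  have hτσ : τ F = σ F := hagr F rfl
  rw [hτσ] at hunion hdisj
  refine ⟨![(σ F).1, (σ F).2], ?_, ?_, ?_⟩
  · intro i j hij
    fin_cases i <;> fin_cases j <;>
      simp only [Matrix.cons_val_zero, Matrix.cons_val_one, Matrix.head_cons] at *
    · exact absurd rfl hij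
    · exact hdisj
    · exact hdisj.symm
    · exact absurd rfl hij
  · ext x
    rw [← hunion]
    simp [Fin.exists_fin_two]
  · intro i
    fin_cases i
    · show F.induce (σ F).1 ∈ SideClass P σ 0
      refine ⟨1, fun _ => F.induce (σ F).1, single_disjUnion _, fun _ => ⟨F, hF, ?_⟩⟩
      rw [if_pos rfl]
      exact le_refl' _
    · show F.induce (σ F).2 ∈ SideClass P σ 1
      refine ⟨1, fun _ => F.induce (σ F).2, single_disjUnion _, fun _ => ⟨F, hF, ?_⟩⟩
      rw [if_neg (by decide : ¬ ((1 : Fin 2) = 0))]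
      exact le_refl' _

/-! ### The product of the side classes is contained in P -/

lemma lin_decode {k t t' j j' : ℕ} (hj : j < k) (hj' : j' < k)
    (h : t*k + j = t'*k + j') : t = t' ∧ j = j' := by
  rcases Nat.lt_trichotomy t t' with hl | hl | hl
  · exfalso
    have h1 : (t+1)*k ≤ t'*k := Nat.mul_le_mul_right _ hl
    rw [add_one_mul] at h1
    omega
  · constructor
    · exact hl
    · rw [hl] at h
      omega
  · exfalso
    have h1 : (t'+1)*k ≤ t*k := Nat.mul_le_mul_right _ hl
    rw [add_one_mul] at h1
    omega

set_option maxHeartbeats 3000000 in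
lemma prod_subset {P : Set NatGraph} (hP : IsAIH P) {σ : NatGraph → Finset ℕ × Finset ℕ}
    (hσ : ∀ 𝒮₀ : Set NatGraph, 𝒮₀ ⊆ P → 𝒮₀.Finite →
      ∃ 𝒮 τ, 𝒮₀ ⊆ 𝒮 ∧ 𝒮 ⊆ P ∧ 𝒮.Finite ∧ Consistent P 𝒮 τ ∧
        ∀ F ∈ 𝒮₀, τ F = σ F) :
    ProdProp ![SideClass P σ 0, SideClass P σ 1] ⊆ P := by
  classical
  rintro H ⟨Y, hYdisj, hYunion, hYmem⟩
  have hQ0 : H.induce (Y 0) ∈ SideClass P σ 0 := by simpa using hYmem 0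
  have hQ1 : H.induce (Y 1) ∈ SideClass P σ 1 := by simpa using hYmem 1
  obtain ⟨p₀, D₀, hdu₀, hLe₀⟩ := hQ0
  obtain ⟨p₁, D₁, hdu₁, hLe₁⟩ := hQ1
  choose F₀ hF₀P hF₀Le using hLe₀
  choose F₁ hF₁P hF₁Le using hLe₁
  -- basic facts about the partition
  have hYsub : ∀ b : Fin 2, Y b ⊆ H.verts := by
    intro b x hx
    rw [← hYunion]
    exact Finset.mem_biUnion.2 ⟨b, Finset.mem_univ b, hx⟩
  have hYv : ∀ b : Fin 2, (H.induce (Y b)).verts = Y b := by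
    intro b
    show H.verts ∩ Y b = Y b
    exact Finset.inter_eq_right.2 (hYsub b)
  -- the combined family of pieces
  set q : ℕ := p₀ + p₁ with hqdef
  set side : Fin q → Fin 2 := fun c => if c.val < p₀ then 0 else 1 with hsidedef
  set DD : Fin q → NatGraph := fun c =>
    if h : c.val < p₀ then D₀ ⟨c.val, h⟩
    else D₁ ⟨c.val - p₀, by have := c.isLt; omega⟩ with hDDdef
  set FF : Fin q → NatGraph := fun c =>
    if h : c.val < p₀ then F₀ ⟨c.val, h⟩
    else F₁ ⟨c.val - p₀, by have := c.isLt; omega⟩ with hFFdef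
  set blkF : Fin q → Finset ℕ := fun c =>
    if side c = 0 then (σ (FF c)).1 else (σ (FF c)).2 with hblkFdef
  have hside0 : ∀ (c : Fin q) (h : c.val < p₀), side c = 0 := by
    intro c h
    show (if c.val < p₀ then (0 : Fin 2) else 1) = 0
    rw [if_pos h]
  have hside1 : ∀ (c : Fin q) (h : ¬ c.val < p₀), side c = 1 := by
    intro c h
    show (if c.val < p₀ then (0 : Fin 2) else 1) = 1
    rw [if_neg h]
  have hDD0 : ∀ (c : Fin q) (h : c.val < p₀), DD c = D₀ ⟨c.val, h⟩ := by
    intro c h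
    show dite _ _ _ = _
    rw [dif_pos h]
  have hDD1 : ∀ (c : Fin q) (h : ¬ c.val < p₀) (c' : Fin p₁),
      c'.val = c.val - p₀ → DD c = D₁ c' := by
    intro c h c' hc'
    show dite _ _ _ = _
    rw [dif_neg h]
    congr 1
    exact Fin.ext hc'.symm
  have hFF0 : ∀ (c : Fin q) (h : c.val < p₀), FF c = F₀ ⟨c.val, h⟩ := by
    intro c h
    show dite _ _ _ = _
    rw [dif_pos h]
  have hFF1 : ∀ (c : Fin q) (h : ¬ c.val < p₀) (c' : Fin p₁),
      c'.val = c.val - p₀ → FF c = F₁ c' := by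
    intro c h c' hc'
    show dite _ _ _ = _
    rw [dif_neg h]
    congr 1
    exact Fin.ext hc'.symm
  have hFFP : ∀ c, FF c ∈ P := by
    intro c
    by_cases h : c.val < p₀
    · rw [hFF0 c h]; exact hF₀P _
    · rw [hFF1 c h ⟨c.val - p₀, by have := c.isLt; omega⟩ rfl]; exact hF₁P _
  have hDDLe : ∀ c, (DD c).Le ((FF c).induce (blkF c)) := by
    intro c
    by_cases h : c.val < p₀
    · rw [hDD0 c h, hFF0 c h]
      have : blkF c = (σ (F₀ ⟨c.val, h⟩)).1 := by
        show (if side c = 0 then (σ (FF c)).1 else (σ (FF c)).2) = _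
        rw [hside0 c h, if_pos rfl, hFF0 c h]
      rw [this]
      have := hF₀Le ⟨c.val, h⟩
      rwa [if_pos rfl] at this
    · rw [hDD1 c h ⟨c.val - p₀, by have := c.isLt; omega⟩ rfl,
        hFF1 c h ⟨c.val - p₀, by have := c.isLt; omega⟩ rfl]
      have : blkF c = (σ (F₁ ⟨c.val - p₀, by have := c.isLt; omega⟩)).2 := by
        show (if side c = 0 then (σ (FF c)).1 else (σ (FF c)).2) = _
        rw [hside1 c h, if_neg (by decide : ¬ ((1 : Fin 2) = 0)),
          hFF1 c h ⟨c.val - p₀, by have := c.isLt; omega⟩ rfl]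
      rw [this]
      have := hF₁Le ⟨c.val - p₀, by have := c.isLt; omega⟩
      rwa [if_neg (by decide : ¬ ((1 : Fin 2) = 0))] at this
  -- pieces sit inside their sides
  have hDDY : ∀ c, (DD c).verts ⊆ Y (side c) := by
    intro c
    by_cases h : c.val < p₀
    · rw [hDD0 c h, hside0 c h, ← hYv 0]
      exact piece_subset hdu₀ _
    · rw [hDD1 c h ⟨c.val - p₀, by have := c.isLt; omega⟩ rfl, hside1 c h, ← hYv 1]
      exact piece_subset hdu₁ _
  have hDDsub : ∀ c, (DD c).verts ⊆ H.verts := fun c =>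
    (hDDY c).trans (hYsub _)
  -- every vertex of H lies in a unique piece
  have hHpieces : ∀ x ∈ H.verts, ∃ c, x ∈ (DD c).verts := by
    intro x hx
    rw [← hYunion] at hx
    obtain ⟨b, _, hb⟩ := Finset.mem_biUnion.1 hx
    fin_cases b
    · have : x ∈ (H.induce (Y 0)).verts := by rw [hYv 0]; exact hb
      rw [hdu₀.2.1] at this
      obtain ⟨c, _, hc⟩ := Finset.mem_biUnion.1 this
      refine ⟨⟨c.val, by have := c.isLt; omega⟩, ?_⟩
      rw [hDD0 _ (by exact c.isLt)]
      simpa using hc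
    · have : x ∈ (H.induce (Y 1)).verts := by rw [hYv 1]; exact hb
      rw [hdu₁.2.1] at this
      obtain ⟨c, _, hc⟩ := Finset.mem_biUnion.1 this
      refine ⟨⟨p₀ + c.val, by have := c.isLt; omega⟩, ?_⟩
      rw [hDD1 _ (by show ¬ (p₀ + c.val < p₀); omega) c
        (by show c.val = p₀ + c.val - p₀; omega)]
      exact hc
  have hpdisj : ∀ c c', c ≠ c' → Disjoint (DD c).verts (DD c').verts := by
    intro c c' hcc
    by_cases h : c.val < p₀ <;> by_cases h' : c'.val < p₀
    · rw [hDD0 c h, hDD0 c' h']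
      exact hdu₀.1 _ _ (fun he => hcc (Fin.ext (by
        have := congrArg Fin.val he; simpa using this)))
    · exact Finset.disjoint_of_subset_left (hDDY c)
        (Finset.disjoint_of_subset_right (hDDY c')
          (by rw [hside0 c h, hside1 c' h']; exact hYdisj 0 1 (by decide)))
    · exact Finset.disjoint_of_subset_left (hDDY c)
        (Finset.disjoint_of_subset_right (hDDY c')
          (by rw [hside1 c h, hside0 c' h']; exact hYdisj 1 0 (by decide)))
    · rw [hDD1 c h ⟨c.val - p₀, by have := c.isLt; omega⟩ rfl,
        hDD1 c' h' ⟨c'.val - p₀, by have := c'.isLt; omega⟩ rfl]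
      exact hdu₁.1 _ _ (fun he => hcc (Fin.ext (by
        have := congrArg Fin.val he
        simp at this
        omega)))
  -- adjacency of H inside pieces and across pieces of the same side
  have hHadj_in : ∀ c, ∀ a ∈ (DD c).verts, ∀ b ∈ (DD c).verts,
      (H.Adj a b ↔ (DD c).Adj a b) := by
    intro c a ha b hb
    have haY := hDDY c ha
    have hbY := hDDY c hb
    have h1 : H.Adj a b ↔ (H.induce (Y (side c))).Adj a b := by
      constructor
      · intro h; exact ⟨h, haY, hbY⟩
      · intro h; exact h.1
    rw [h1]
    by_cases h : c.val < p₀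
    · rw [hside0 c h] at *
      rw [hDD0 c h] at ha ⊢
      exact disjUnion_adj_localize hdu₀ ha
    · rw [hside1 c h] at *
      rw [hDD1 c h ⟨c.val - p₀, by have := c.isLt; omega⟩ rfl] at ha ⊢
      exact disjUnion_adj_localize hdu₁ ha
  have hHadj_cross : ∀ c c', c ≠ c' → side c = side c' →
      ∀ a ∈ (DD c).verts, ∀ b ∈ (DD c').verts, ¬ H.Adj a b := by
    intro c c' hcc hss a ha b hb hadj
    have haY := hDDY c ha
    have hbY := hDDY c' hb
    rw [hss] at haY
    have h2 : (H.induce (Y (side c'))).Adj a b := ⟨hadj, haY, hbY⟩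
    by_cases h' : c'.val < p₀
    · rw [hside0 c' h'] at h2
      obtain ⟨i, hi⟩ := (hdu₀.2.2 a b).1 h2
      obtain ⟨hai, hbi⟩ := (D₀ i).mem_of_adj a b hi
      have hcast : (⟨i.val, by have := i.isLt; omega⟩ : Fin q) = c := by
        by_contra hne
        exact Finset.disjoint_left.1 (hpdisj _ c hne)
          (by rw [hDD0 _ (by exact i.isLt)]; simpa using hai) ha
      have hcast' : (⟨i.val, by have := i.isLt; omega⟩ : Fin q) = c' := by
        by_contra hne
        exact Finset.disjoint_left.1 (hpdisj _ c' hne)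
          (by rw [hDD0 _ (by exact i.isLt)]; simpa using hbi) hb
      exact hcc (hcast ▸ hcast')
    · rw [hside1 c' h'] at h2
      obtain ⟨i, hi⟩ := (hdu₁.2.2 a b).1 h2
      obtain ⟨hai, hbi⟩ := (D₁ i).mem_of_adj a b hi
      have hcast : (⟨p₀ + i.val, by have := i.isLt; omega⟩ : Fin q) = c := by
        by_contra hne
        exact Finset.disjoint_left.1 (hpdisj _ c hne)
          (by rw [hDD1 _ (by show ¬ (p₀ + i.val < p₀); omega) i
            (by show i.val = p₀ + i.val - p₀; omega)]; exact hai) ha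
      have hcast' : (⟨p₀ + i.val, by have := i.isLt; omega⟩ : Fin q) = c' := by
        by_contra hne
        exact Finset.disjoint_left.1 (hpdisj _ c' hne)
          (by rw [hDD1 _ (by show ¬ (p₀ + i.val < p₀); omega) i
            (by show i.val = p₀ + i.val - p₀; omega)]; exact hbi) hb
      exact hcc (hcast ▸ hcast')
  -- the consistent family for all the F's
  obtain ⟨𝒮, τ, hsub, h𝒮P, hfin, hcons, hagr⟩ := hσ (Set.range FF)
    (by rintro _ ⟨c, rfl⟩; exact hFFP c) (Set.finite_range FF)
  obtain ⟨N, m, V, cmap, ρ, hdec, hcsurj, hmem⟩ := hcons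
  have hmemc := fun c => hmem (FF c) (hsub ⟨c, rfl⟩)
  have hττ : ∀ c, τ (FF c) = σ (FF c) := fun c => hagr _ ⟨c, rfl⟩
  have hρiso : ∀ c, (FF c).IsoVia (N.induce ((FF c).verts.image (ρ (FF c))))
      (ρ (FF c)) := fun c => (hmemc c).1
  have hρsub : ∀ c, (FF c).verts.image (ρ (FF c)) ⊆ N.verts :=
    fun c => (hmemc c).2.1
  have hblkV : ∀ c, ∀ x ∈ blkF c, ∃ t, cmap t = side c ∧ ρ (FF c) x ∈ V t := by
    intro c x hx
    rcases fin2_cases (side c) with hs | hs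
    · have hx1 : x ∈ (σ (FF c)).1 := by
        have : blkF c = (σ (FF c)).1 := by
          show (if side c = 0 then (σ (FF c)).1 else (σ (FF c)).2) = _
          rw [if_pos hs]
        rwa [this] at hx
      have h0 := (hmemc c).2.2.2.2.1
      rw [hττ c] at h0
      obtain ⟨t, ht1, ht2⟩ := h0 x hx1
      exact ⟨t, by rw [hs]; exact ht1, ht2⟩
    · have hx2 : x ∈ (σ (FF c)).2 := by
        have : blkF c = (σ (FF c)).2 := by
          show (if side c = 0 then (σ (FF c)).1 else (σ (FF c)).2) = _
          rw [hs]
          rw [if_neg (by decide : ¬ ((1 : Fin 2) = 0))]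
        rwa [this] at hx
      have h1 := (hmemc c).2.2.2.2.2
      rw [hττ c] at h1
      obtain ⟨t, ht1, ht2⟩ := h1 x hx2
      exact ⟨t, by rw [hs]; exact ht1, ht2⟩
  have hFFadj : ∀ c, ∀ x ∈ (FF c).verts, ∀ y ∈ (FF c).verts,
      ((FF c).Adj x y ↔ N.Adj (ρ (FF c) x) (ρ (FF c) y)) := by
    intro c x hx y hy
    rw [(hρiso c).2 x hx y hy]
    show (N.Adj (ρ (FF c) x) (ρ (FF c) y) ∧
      ρ (FF c) x ∈ (FF c).verts.image (ρ (FF c)) ∧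
      ρ (FF c) y ∈ (FF c).verts.image (ρ (FF c))) ↔ _
    constructor
    · exact fun h => h.1
    · intro h
      exact ⟨h, Finset.mem_image_of_mem _ hx, Finset.mem_image_of_mem _ hy⟩
  -- piece embeddings
  choose U hUsub hIso using hDDLe
  choose ψ hψ using hIso
  have hψmem : ∀ c, ∀ x ∈ (DD c).verts,
      ψ c x ∈ (FF c).verts ∧ ψ c x ∈ blkF c ∧ ψ c x ∈ U c := by
    intro c x hx
    have h1 : ψ c x ∈ ((((FF c).induce (blkF c)).induce (U c)).verts : Set ℕ) :=
      (hψ c).1.1 (by exact_mod_cast hx)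
    have h2 : ψ c x ∈ (((FF c).verts ∩ blkF c) ∩ U c) := by exact_mod_cast h1
    obtain ⟨h3, h4⟩ := Finset.mem_inter.1 h2
    obtain ⟨h5, h6⟩ := Finset.mem_inter.1 h3
    exact ⟨h5, h6, h4⟩
  set em : Fin q → ℕ → ℕ := fun c x => ρ (FF c) (ψ c x) with hemdef
  have hemN : ∀ c, ∀ x ∈ (DD c).verts, em c x ∈ N.verts := by
    intro c x hx
    exact hρsub c (Finset.mem_image_of_mem _ (hψmem c x hx).1)
  have hemV : ∀ c, ∀ x ∈ (DD c).verts, ∃ t, cmap t = side c ∧ em c x ∈ V t := by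
    intro c x hx
    exact hblkV c (ψ c x) (hψmem c x hx).2.1
  have hem_adj : ∀ c, ∀ x ∈ (DD c).verts, ∀ y ∈ (DD c).verts,
      ((DD c).Adj x y ↔ N.Adj (em c x) (em c y)) := by
    intro c x hx y hy
    rw [(hψ c).2 x hx y hy]
    constructor
    · intro h
      exact (hFFadj c _ (hψmem c x hx).1 _ (hψmem c y hy).1).1 h.1.1
    · intro h
      exact ⟨⟨(hFFadj c _ (hψmem c x hx).1 _ (hψmem c y hy).1).2 h,
        (hψmem c x hx).2.1, (hψmem c y hy).2.1⟩,
        (hψmem c x hx).2.2, (hψmem c y hy).2.2⟩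
  have hem_inj : ∀ c, ∀ x ∈ (DD c).verts, ∀ y ∈ (DD c).verts,
      em c x = em c y → x = y := by
    intro c x hx y hy he
    have h1 : ψ c x = ψ c y := (hρiso c).1.2.1
      (by exact_mod_cast (hψmem c x hx).1) (by exact_mod_cast (hψmem c y hy).1) he
    exact (hψ c).1.2.1 (by exact_mod_cast hx) (by exact_mod_cast hy) h1
  -- the part function
  have hVsub : ∀ t, V t ⊆ N.verts := by
    intro t x hx
    rw [← hdec.2.2.1]
    exact Finset.mem_biUnion.2 ⟨t, Finset.mem_univ t, hx⟩
  set t0 : Fin m := (hcsurj 0).choose with ht0def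
  set pt : ℕ → Fin m := fun x => if h : ∃ t, x ∈ V t then h.choose else t0 with hptdef
  have hptV : ∀ x, ∀ t, x ∈ V t → x ∈ V (pt x) := by
    intro x t hx
    have h : ∃ t, x ∈ V t := ⟨t, hx⟩
    show x ∈ V (if h' : ∃ t, x ∈ V t then h'.choose else t0)
    rw [dif_pos h]
    exact h.choose_spec
  have hptu : ∀ x, ∀ t, x ∈ V t → pt x = t := by
    intro x t hx
    by_contra hne
    exact absurd hx (Finset.disjoint_left.1 (hdec.2.1 (pt x) t hne) (hptV x t hx))
  have hptside : ∀ c, ∀ x ∈ (DD c).verts, cmap (pt (em c x)) = side c := by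
    intro c x hx
    obtain ⟨t, hct, hVt⟩ := hemV c x hx
    rw [hptu _ t hVt]
    exact hct
  have hptmem : ∀ c, ∀ x ∈ (DD c).verts, em c x ∈ V (pt (em c x)) := by
    intro c x hx
    obtain ⟨t, _, hVt⟩ := hemV c x hx
    exact hptV _ t hVt
  -- offsets and copies
  set k : ℕ := q + 1 with hkdef
  set B : ℕ := N.verts.sup id with hBdef
  have hB : ∀ x ∈ N.verts, x ≤ B := by
    intro x hx
    have := Finset.le_sup (f := id) hx
    simpa using this
  have hsupV : ∀ t : Fin m, (N.induce (V t)).verts.sup id ≤ B :=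
    fun t => Finset.sup_mono Finset.inter_subset_left
  set O : Fin m → Fin k → ℕ := fun t j => (t.val * k + j.val) * (B + 1) with hOdef
  have hOdec : ∀ (x y : ℕ) (t t' : Fin m) (j j' : Fin k), x ≤ B → y ≤ B →
      x + O t j = y + O t' j' → x = y ∧ t = t' ∧ j = j' := by
    intro x y t t' j j' hx hy he
    have h1 := offset_decode (B := B) hx hy he
    have h2 := lin_decode j.isLt j'.isLt h1.2
    exact ⟨h1.1, Fin.ext h2.1, Fin.ext h2.2⟩
  set Cp : Fin m → Fin k → NatGraph := fun t j => shiftCopy (N.induce (V t)) (O t j)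
    with hCpdef
  have hCpDisj : ∀ (t t' : Fin m) (j j' : Fin k), ¬(t = t' ∧ j = j') →
      Disjoint (Cp t j).verts (Cp t' j').verts := by
    intro t t' j j' h
    have hll : t.val * k + j.val ≠ t'.val * k + j'.val := by
      intro he
      obtain ⟨h1, h2⟩ := lin_decode j.isLt j'.isLt he
      exact h ⟨Fin.ext h1, Fin.ext h2⟩
    rcases Nat.lt_trichotomy (t.val * k + j.val) (t'.val * k + j'.val) with hlt | he | hlt
    · exact shiftCopy_disjoint (hsupV t) (offset_lt _ _ hlt)
    · exact absurd he hll
    · exact (shiftCopy_disjoint (hsupV t') (offset_lt _ _ hlt)).symm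
  set A : Fin m → NatGraph := fun t => punion (fun j => Cp t j) k with hAdef
  have hAdu : ∀ t, IsDisjUnion (A t) (fun j => Cp t j) := by
    intro t
    refine punion_isDisjUnion _ ?_
    intro i j hij
    exact hCpDisj t t i j (fun h => hij h.2)
  have hAkc : ∀ t, A t ∈ kCopies k (N.induce (V t)) :=
    fun t => ⟨fun j => Cp t j, fun j => iso_symm (shiftCopy_iso _ _), hAdu t⟩
  have hAverts : ∀ (t : Fin m) (x : ℕ),
      x ∈ (A t).verts ↔ ∃ j, x ∈ (Cp t j).verts := by
    intro t x
    rw [(hAdu t).2.1]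
    simp
  have hAdisj : ∀ t t', t ≠ t' → Disjoint (A t).verts (A t').verts := by
    intro t t' htt
    rw [Finset.disjoint_left]
    intro x hx hx'
    obtain ⟨j, hj⟩ := (hAverts t x).1 hx
    obtain ⟨j', hj'⟩ := (hAverts t' x).1 hx'
    exact Finset.disjoint_left.1 (hCpDisj t t' j j' (fun h => htt h.1)) hj hj'
  -- the global embedding
  set gj : Fin q → Fin k := fun c => ⟨c.val, by have := c.isLt; omega⟩ with hgjdef
  set Φ : ℕ → ℕ := fun x => if h : ∃ c, x ∈ (DD c).verts
    then em h.choose x + O (pt (em h.choose x)) (gj h.choose) else x with hΦdef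
  have hΦ : ∀ c, ∀ x ∈ (DD c).verts, Φ x = em c x + O (pt (em c x)) (gj c) := by
    intro c x hx
    have hex : ∃ c', x ∈ (DD c').verts := ⟨c, hx⟩
    have hch : hex.choose = c := by
      by_contra hne
      exact Finset.disjoint_left.1 (hpdisj _ _ hne) hex.choose_spec hx
    show (if h : ∃ c', x ∈ (DD c').verts
      then em h.choose x + O (pt (em h.choose x)) (gj h.choose) else x) = _
    rw [dif_pos hex, hch]
  have hΦCp : ∀ c, ∀ x ∈ (DD c).verts,
      Φ x ∈ (Cp (pt (em c x)) (gj c)).verts := by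
    intro c x hx
    rw [hΦ c x hx]
    exact shiftCopy_mem_iff.2 (Finset.mem_inter.2 ⟨hemN c x hx, hptmem c x hx⟩)
  have hΦA : ∀ c, ∀ x ∈ (DD c).verts, Φ x ∈ (A (pt (em c x))).verts := by
    intro c x hx
    exact (hAverts _ _).2 ⟨gj c, hΦCp c x hx⟩
  have hΦinj : ∀ x ∈ H.verts, ∀ y ∈ H.verts, Φ x = Φ y → x = y := by
    intro x hx y hy he
    obtain ⟨cx, hcx⟩ := hHpieces x hx
    obtain ⟨cy, hcy⟩ := hHpieces y hy
    rw [hΦ cx x hcx, hΦ cy y hcy] at he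
    obtain ⟨he1, _, he3⟩ := hOdec _ _ _ _ _ _ (hB _ (hemN cx x hcx))
      (hB _ (hemN cy y hcy)) he
    have hcc : cx = cy := Fin.ext (by
      have := congrArg Fin.val he3
      simpa using this)
    subst hcc
    exact hem_inj cx x hcx y hcy he1
  set E : ℕ → ℕ → Prop := fun a b => ∃ x, x ∈ H.verts ∧ ∃ y, y ∈ H.verts ∧
    H.Adj x y ∧ a = Φ x ∧ b = Φ y with hEdef
  set Hp : NatGraph := glue A E with hHpdef
  have hHpP : Hp ∈ P :=
    hdec.2.2.2 k (by omega) A hAkc hAdisj Hp (glue_mem_starJoin E hAdisj)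
  have hΦHp : ∀ x ∈ H.verts, Φ x ∈ Hp.verts := by
    intro x hx
    obtain ⟨c, hc⟩ := hHpieces x hx
    exact Finset.mem_biUnion.2 ⟨pt (em c x), Finset.mem_univ _, hΦA c x hc⟩
  -- adjacency transfer
  have hkey : ∀ x ∈ H.verts, ∀ y ∈ H.verts, (H.Adj x y ↔ Hp.Adj (Φ x) (Φ y)) := by
    intro x hx y hy
    obtain ⟨cx, hcx⟩ := hHpieces x hx
    obtain ⟨cy, hcy⟩ := hHpieces y hy
    by_cases htt : pt (em cx x) = pt (em cy y)
    · by_cases hcc : cx = cy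
      · rw [← hcc] at hcy htt
        rw [hHpdef, glue_adj_same hAdisj (hΦA cx x hcx) (htt ▸ hΦA cx y hcy)]
        rw [disjUnion_adj_localize (hAdu (pt (em cx x))) (hΦCp cx x hcx)]
        rw [hΦ cx x hcx, hΦ cx y hcy, ← htt]
        rw [shiftCopy_adj_iff]
        rw [hHadj_in cx x hcx y hcy, hem_adj cx x hcx y hcy]
        constructor
        · intro h
          exact ⟨h, hptmem cx x hcx, htt ▸ hptmem cx y hcy⟩
        · exact fun h => h.1
      · have hss : side cx = side cy := by
          rw [← hptside cx x hcx, ← hptside cy y hcy, htt]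
        refine iff_of_false (hHadj_cross cx cy hcc hss x hcx y hcy) ?_
        rw [hHpdef, glue_adj_same hAdisj (hΦA cx x hcx)
          (show Φ y ∈ (A (pt (em cx x))).verts by rw [htt]; exact hΦA cy y hcy)]
        intro hadj
        rw [(hAdu (pt (em cx x))).2.2] at hadj
        obtain ⟨j, hj⟩ := hadj
        obtain ⟨h1, h2⟩ := (Cp (pt (em cx x)) j).mem_of_adj _ _ hj
        have hj1 : j = gj cx := by
          by_contra hne
          exact Finset.disjoint_left.1
            (hCpDisj _ _ j (gj cx) (fun h => hne h.2)) h1 (hΦCp cx x hcx)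
        have hj2 : j = gj cy := by
          by_contra hne
          refine Finset.disjoint_left.1
            (hCpDisj (pt (em cx x)) (pt (em cx x)) j (gj cy) (fun h => hne h.2)) h2 ?_
          rw [htt]
          exact hΦCp cy y hcy
        apply hcc
        apply Fin.ext
        have := congrArg Fin.val (hj1.symm.trans hj2)
        simpa using this
    · rw [hHpdef, glue_adj_cross hAdisj htt (hΦA cx x hcx) (hΦA cy y hcy)]
      constructor
      · intro h
        exact Or.inl ⟨x, hx, y, hy, h, rfl, rfl⟩
      · rintro (⟨x', hx', y', hy', hadj, he1, he2⟩ |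
          ⟨x', hx', y', hy', hadj, he1, he2⟩)
        · rw [hΦinj x hx x' hx' he1, hΦinj y hy y' hy' he2]
          exact hadj
        · rw [hΦinj x hx y' hy' he2, hΦinj y hy x' hx' he1]
          exact H.symm _ _ hadj
  -- conclude : H embeds into Hp
  have him : H.verts.image Φ ⊆ Hp.verts := by
    intro z hz
    obtain ⟨x, hx, rfl⟩ := Finset.mem_image.1 hz
    exact hΦHp x hx
  refine hP.2.1 Hp H hHpP ⟨H.verts.image Φ, him, Φ, ?_, ?_⟩
  · have h1 : ((Hp.induce (H.verts.image Φ)).verts : Set ℕ)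
        = ((H.verts.image Φ : Finset ℕ) : Set ℕ) := by
      show ((Hp.verts ∩ _ : Finset ℕ) : Set ℕ) = _
      rw [Finset.inter_eq_right.2 him]
    rw [h1, Finset.coe_image]
    exact Set.InjOn.bijOn_image (fun x hx y hy =>
      hΦinj x (by exact_mod_cast hx) y (by exact_mod_cast hy))
  · intro a ha b hb
    rw [hkey a ha b hb]
    constructor
    · intro h
      obtain ⟨h1, h2⟩ := Hp.mem_of_adj _ _ h
      exact ⟨h, Finset.mem_image_of_mem Φ ha, Finset.mem_image_of_mem Φ hb⟩
    · exact fun h => h.1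

/-- The hard direction: if `P` is irreducible then some `P`-strict graph has
no `P`-decomposition with two or more parts. -/
lemma hard_direction {P : Set NatGraph} (hP : IsAIH P) (hne : P ≠ Set.univ)
    (hirr : ¬∃ Q R : Set NatGraph, IsAIH Q ∧ IsAIH R ∧ P = ProdProp ![Q, R]) :
    ∃ G, Strict P G ∧ decP P G ≤ 1 := by
  by_contra hcon
  push_neg at hcon
  have hdecAll : ∀ N, Strict P N → ∃ (m : ℕ) (V : Fin m → Finset ℕ),
      2 ≤ m ∧ IsDecomp P N V := by
    intro N hN
    have h2 : 2 ≤ decP P N := by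
      have := hcon N hN
      omega
    have hne' : {n | ∃ V : Fin n → Finset ℕ, IsDecomp P N V}.Nonempty := by
      by_contra hh
      rw [Set.not_nonempty_iff_eq_empty] at hh
      have h0 : decP P N = 0 := by
        unfold decP
        rw [hh]
        simp [csSup_empty]
      omega
    obtain ⟨V, hV⟩ := Nat.sSup_mem hne' (decomp_bddAbove P N)
    exact ⟨decP P N, V, h2, hV⟩
  obtain ⟨G, hGstrict⟩ := exists_strict hP hne
  obtain ⟨Hh, v, T, hHP, hv, hHverts, hagree, hTsub, hTne, hTadj⟩ :=
    exists_witness hP hGstrict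
  have hGP := hGstrict.1
  have hCons : ∀ 𝒮 : Set NatGraph, 𝒮 ⊆ P → 𝒮.Finite → ∃ τ, Consistent P 𝒮 τ :=
    fun 𝒮 h1 h2 =>
      consistent_exists hP hGP hHP hv hHverts hagree hTsub hTadj hdecAll 𝒮 h1 h2
  obtain ⟨σ, hσ⟩ := exists_sigma hCons
  have hGblk : ∀ b : Fin 2,
      (G.verts ∩ (if b = 0 then (σ G).1 else (σ G).2)).Nonempty := by
    obtain ⟨𝒮, τ, hsub, h𝒮P, hfin, hcons, hagr⟩ :=
      hσ {G} (by simpa using hGP) (Set.finite_singleton G)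
    obtain ⟨N, m, V, cmap, ρ, hdec, hcsurj, hmem⟩ := hcons
    have hG𝒮 : G ∈ 𝒮 := hsub rfl
    obtain ⟨hiso, hsub', hunion, hdisj', hb0, hb1⟩ := hmem G hG𝒮
    have hτσ : τ G = σ G := hagr G rfl
    rw [hτσ] at hunion hdisj' hb0 hb1
    have hclone := clone_lemma hP hdec hiso hsub' hHP hv hHverts hagree hTsub hTadj
    intro b
    obtain ⟨t, ht⟩ := hcsurj b
    obtain ⟨y, hy⟩ := hclone t
    obtain ⟨hyT, hyV⟩ := Finset.mem_inter.1 hy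
    obtain ⟨x, hxT, rfl⟩ := Finset.mem_image.1 hyT
    have hxG : x ∈ G.verts := hTsub hxT
    refine ⟨x, Finset.mem_inter.2 ⟨hxG, ?_⟩⟩
    rcases fin2_cases b with rfl | rfl
    · rw [if_pos rfl]
      by_contra hx1
      have hx2 : x ∈ (σ G).2 := by
        have hxu : x ∈ (σ G).1 ∪ (σ G).2 := hunion ▸ hxG
        rcases Finset.mem_union.1 hxu with h | h
        · exact absurd h hx1
        · exact h
      obtain ⟨t', ht', hVt'⟩ := hb1 x hx2
      have htt : t' = t := by
        by_contra hne'
        exact Finset.disjoint_left.1 (hdec.2.1 t' t hne') hVt' hyV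
      rw [htt, ht] at ht'
      exact absurd ht' (by decide)
    · rw [if_neg (by decide : ¬ ((1 : Fin 2) = 0))]
      by_contra hx2
      have hx1 : x ∈ (σ G).1 := by
        have hxu : x ∈ (σ G).1 ∪ (σ G).2 := hunion ▸ hxG
        rcases Finset.mem_union.1 hxu with h | h
        · exact h
        · exact absurd h hx2
      obtain ⟨t', ht', hVt'⟩ := hb0 x hx1
      have htt : t' = t := by
        by_contra hne'
        exact Finset.disjoint_left.1 (hdec.2.1 t' t hne') hVt' hyV
      rw [htt, ht] at ht'
      exact absurd ht' (by decide)
  apply hirr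
  refine ⟨SideClass P σ 0, SideClass P σ 1, ?_, ?_, ?_⟩
  · exact sideClass_AIH ⟨G, hGP, hGblk 0⟩
  · exact sideClass_AIH ⟨G, hGP, hGblk 1⟩
  · exact Set.Subset.antisymm (subset_prod hσ) (prod_subset hP hσ)

end AuxStmt15

-- STATEMENT 15
theorem statement15 (P : Set NatGraph) (hP : IsAIH P) (hne : P ≠ Set.univ) :
    (¬∃ Q R : Set NatGraph, IsAIH Q ∧ IsAIH R ∧ P = ProdProp ![Q, R]) ↔
      decOf P = 1 := by
  constructor
  · intro hirr
    obtain ⟨G, hGs, hG1⟩ := AuxStmt15.hard_direction hP hne hirr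
    have hge : 1 ≤ decP P G := AuxStmt15.decP_ge_one hP hGs
    have h1 : decP P G = 1 := le_antisymm hG1 hge
    refine le_antisymm ?_ ?_
    · exact Nat.sInf_le ⟨G, hGs, h1⟩
    · refine le_csInf ⟨decP P G, G, hGs, rfl⟩ ?_
      rintro b ⟨G', hG', rfl⟩
      exact AuxStmt15.decP_ge_one hP hG'
  · rintro h1 ⟨Q, R, hQ, hR, hPQ⟩
    have hne' : (decP P '' {G | Strict P G}).Nonempty := by
      by_contra h
      rw [Set.not_nonempty_iff_eq_empty] at h
      unfold decOf at h1
      rw [h, Nat.sInf_empty] at h1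
      exact absurd h1 (by norm_num)
    have hmem := Nat.sInf_mem hne'
    unfold decOf at h1
    rw [h1] at hmem
    obtain ⟨G, hGs, hG1⟩ := hmem
    have h2 := AuxStmt15.two_le_decP_of_factor hP hQ hR hPQ hGs
    omega
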